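/- arXiv:2403.06619 — 6 statements merged into one kernel-verified Lean document; each statement's English description precedes it below -/
import Mathlib

section
/- Let γ ∈ k be a root of x³ + a·x + b (so W = (γ, 0) is a k-rational point of order 2 on E, and the Miller function of W is h_W(x,y) = x − γ). If P and Q = (x_Q, y_Q) are affine points of E(k) with 2•P = Q, then x_Q − γ is a square in k. -/
/-- The elliptic curve `y² = x³ + a·x + b` in short Weierstrass form. -/
def shortWCurve {k : Type*} [Field k] (a b : k) : WeierstrassCurve.Affine k :=
  { a₁ := 0, a₂ := 0, a₃ := 0, a₄ := a, a₆ := b }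

open Classical in
theorem stmt_6 {k : Type*} [Field k] (h2 : (2 : k) ≠ 0) (h3 : (3 : k) ≠ 0)
    (a b : k) (hΔ : -16 * (4 * a ^ 3 + 27 * b ^ 2) ≠ 0)
    (γ : k) (hγ : γ ^ 3 + a * γ + b = 0)
    (xP yP xQ yQ : k)
    (hP : (shortWCurve a b).Nonsingular xP yP)
    (hQ : (shortWCurve a b).Nonsingular xQ yQ)
    (hPQ : 2 • (WeierstrassCurve.Affine.Point.some _ _ hP)
        = WeierstrassCurve.Affine.Point.some _ _ hQ) :
    ∃ ω : k, ω ^ 2 = xQ - γ := by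
  have hEq : yP ^ 2 = xP ^ 3 + a * xP + b := by
    have := ((shortWCurve a b).equation_iff xP yP).mp hP.1
    simpa [shortWCurve] using this
  by_cases hy : yP = (shortWCurve a b).negY xP yP
  · rw [two_smul, WeierstrassCurve.Affine.Point.add_self_of_Y_eq hy] at hPQ
    exact absurd hPQ.symm (by simp [WeierstrassCurve.Affine.Point.zero_def])
  · rw [two_smul, WeierstrassCurve.Affine.Point.add_self_of_Y_ne hy] at hPQ
    have hyne : yP ≠ -yP := by simpa [shortWCurve, WeierstrassCurve.Affine.negY] using hy
    have hy0 : yP ≠ 0 := fun h => hyne (by rw [h]; ring)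
    have hx : (shortWCurve a b).addX xP xP
        ((shortWCurve a b).slope xP xP yP yP) = xQ := by
      injection hPQ
    have hslope : (shortWCurve a b).slope xP xP yP yP = (3 * xP ^ 2 + a) / (2 * yP) := by
      rw [WeierstrassCurve.Affine.slope_of_Y_ne rfl hy]
      simp [shortWCurve, WeierstrassCurve.Affine.negY]
      ring_nf
    have hxQ : xQ = ((3 * xP ^ 2 + a) / (2 * yP)) ^ 2 - 2 * xP := by
      rw [← hx, hslope]
      simp [shortWCurve, WeierstrassCurve.Affine.addX]
      ring
    refine ⟨(a + 2 * γ ^ 2 + 2 * γ * xP - xP ^ 2) / (2 * yP), ?_⟩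
    rw [hxQ]
    have h2y : (2 : k) * yP ≠ 0 := mul_ne_zero h2 hy0
    field_simp
    linear_combination (4 * (2 * xP + γ)) * hEq + (4 * (2 * xP + γ)) * hγ
end

section
/- Suppose the full 2-torsion of E is k-rational, i.e. x³ + a·x + b = (x − γ₁)(x − γ₂)(x − γ₃) with γ₁, γ₂, γ₃ ∈ k. Let Q = (x_Q, y_Q) ∈ E(k) be an affine point with y_Q ≠ 0 (i.e. Q is not a 2-torsion point). Then there exists P ∈ E(k) with 2•P = Q if and only if both x_Q − γ₁ and x_Q − γ₂ are squares in k. -/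
open Polynomial

/-- Port helper: the group law on points now needs `IsElliptic`, which follows from `hΔ`. -/
theorem shortWCurve_isElliptic {k : Type*} [Field k] (a b : k)
    (hΔ : -16 * (4 * a ^ 3 + 27 * b ^ 2) ≠ 0) :
    WeierstrassCurve.IsElliptic (shortWCurve a b) := by
  refine ⟨isUnit_iff_ne_zero.mpr ?_⟩
  convert hΔ using 1
  simp only [WeierstrassCurve.Δ, WeierstrassCurve.b₂, WeierstrassCurve.b₄,
    WeierstrassCurve.b₆, WeierstrassCurve.b₈, shortWCurve]
  ring

namespace StmtSevenAux

open WeierstrassCurve.Affine WeierstrassCurve.Affine.Point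

lemma shortW_equation {k : Type*} [Field k] {a b x y : k} :
    (shortWCurve a b).Equation x y ↔ y ^ 2 = x ^ 3 + a * x + b := by
  rw [WeierstrassCurve.Affine.equation_iff]
  constructor <;> intro h <;>
    · simp only [shortWCurve] at *; linear_combination h

lemma shortW_negY {k : Type*} [Field k] (a b x y : k) :
    (shortWCurve a b).negY x y = -y := by
  simp [shortWCurve, WeierstrassCurve.Affine.negY]

lemma shortW_slope {k : Type*} [Field k] [DecidableEq k] {a b x y : k}
    (hy : y ≠ (shortWCurve a b).negY x y) :
    (shortWCurve a b).slope x x y y = (3 * x ^ 2 + a) / (2 * y) := by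
  rw [WeierstrassCurve.Affine.slope_of_Y_ne rfl hy, shortW_negY]
  show (3 * x ^ 2 + 2 * (shortWCurve a b).a₂ * x + (shortWCurve a b).a₄
      - (shortWCurve a b).a₁ * y) / _ = _
  simp only [shortWCurve]
  ring_nf

lemma shortW_addX {k : Type*} [Field k] (a b x L : k) :
    (shortWCurve a b).addX x x L = L ^ 2 - 2 * x := by
  simp [shortWCurve, WeierstrassCurve.Affine.addX]; ring

lemma shortW_Δ {k : Type*} [Field k] (a b : k) :
    (shortWCurve a b).Δ = -16 * (4 * a ^ 3 + 27 * b ^ 2) := by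
  simp [shortWCurve, WeierstrassCurve.Δ, WeierstrassCurve.b₂, WeierstrassCurve.b₄,
    WeierstrassCurve.b₆, WeierstrassCurve.b₈]
  ring

lemma some_eq_some {F : Type*} [Field F] {W : WeierstrassCurve.Affine F} {x1 y1 x2 y2 : F}
    (hx : x1 = x2) (hy : y1 = y2) {h1 : W.Nonsingular x1 y1} {h2 : W.Nonsingular x2 y2} :
    Point.some _ _ h1 = Point.some _ _ h2 := by subst hx; subst hy; rfl

end StmtSevenAux

open StmtSevenAux WeierstrassCurve.Affine WeierstrassCurve.Affine.Point in
theorem stmt_7 {k : Type*} [Field k] (h2 : (2 : k) ≠ 0) (h3 : (3 : k) ≠ 0)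
    (a b : k) (hΔ : -16 * (4 * a ^ 3 + 27 * b ^ 2) ≠ 0)
    (γ₁ γ₂ γ₃ : k)
    (hfact : (X ^ 3 + C a * X + C b : k[X])
        = (X - C γ₁) * (X - C γ₂) * (X - C γ₃))
    (xQ yQ : k) (hQ : (shortWCurve a b).Nonsingular xQ yQ) (hyQ : yQ ≠ 0) :
    (∃ P : (shortWCurve a b).Point,
        haveI := shortWCurve_isElliptic a b hΔ
        haveI := Classical.decEq k
        2 • P = WeierstrassCurve.Affine.Point.some xQ yQ hQ) ↔
      (∃ ω : k, ω ^ 2 = xQ - γ₁) ∧ (∃ ω : k, ω ^ 2 = xQ - γ₂) := by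
  -- extract coefficient relations and substitute
  letI := Classical.decEq k
  have hexp : ((X - C γ₁) * (X - C γ₂) * (X - C γ₃) : k[X])
      = X ^ 3 - C (γ₁ + γ₂ + γ₃) * X ^ 2 + C (γ₁ * γ₂ + γ₁ * γ₃ + γ₂ * γ₃) * X
        - C (γ₁ * γ₂ * γ₃) := by
    simp only [C_add, C_mul]; ring
  rw [hexp] at hfact
  have hc2 := congrArg (fun p => Polynomial.coeff p 2) hfact
  have hc1 := congrArg (fun p => Polynomial.coeff p 1) hfact
  have hc0 := congrArg (fun p => Polynomial.coeff p 0) hfact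
  simp only [coeff_add, coeff_sub, coeff_C_mul, coeff_X_pow, coeff_C, coeff_X] at hc0 hc1 hc2
  norm_num at hc0 hc1 hc2
  have h3' : γ₃ = -γ₁ - γ₂ := by linear_combination hc2
  have ha : a = γ₁ * γ₂ + γ₁ * γ₃ + γ₂ * γ₃ := by linear_combination hc1
  have hb : b = -(γ₁ * γ₂ * γ₃) := by linear_combination hc0
  subst h3'; subst ha; subst hb
  -- distinctness of the roots
  have hdisc : (γ₁ - γ₂) * (2 * γ₁ + γ₂) * (γ₁ + 2 * γ₂) ≠ 0 := by
    intro h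
    exact hΔ (by linear_combination 16 * ((γ₁ - γ₂) * (2 * γ₁ + γ₂) * (γ₁ + 2 * γ₂)) * h)
  have hd12 : γ₁ - γ₂ ≠ 0 := fun h => hdisc (by rw [h]; ring)
  have hd13 : 2 * γ₁ + γ₂ ≠ 0 := fun h => hdisc (by rw [h]; ring)
  have hd23 : γ₁ + 2 * γ₂ ≠ 0 := fun h => hdisc (by rw [h]; ring)
  let W := shortWCurve (γ₁ * γ₂ + γ₁ * (-γ₁ - γ₂) + γ₂ * (-γ₁ - γ₂))
    (-(γ₁ * γ₂ * (-γ₁ - γ₂)))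
  have hW : W = shortWCurve (γ₁ * γ₂ + γ₁ * (-γ₁ - γ₂) + γ₂ * (-γ₁ - γ₂))
    (-(γ₁ * γ₂ * (-γ₁ - γ₂))) := rfl
  have hΔW : W.Δ ≠ 0 := by rw [hW, shortW_Δ]; exact hΔ
  have heqQ : yQ ^ 2 = xQ ^ 3 + (γ₁ * γ₂ + γ₁ * (-γ₁ - γ₂) + γ₂ * (-γ₁ - γ₂)) * xQ
      + -(γ₁ * γ₂ * (-γ₁ - γ₂)) := shortW_equation.mp hQ.1
  constructor
  · -- forward direction
    rintro ⟨P, hP⟩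
    rw [two_nsmul] at hP
    cases P with
    | zero => exact absurd hP.symm (some_ne_zero hQ)
    | some xP yP hP' =>
      have heqP : yP ^ 2 = xP ^ 3 + (γ₁ * γ₂ + γ₁ * (-γ₁ - γ₂) + γ₂ * (-γ₁ - γ₂)) * xP
          + -(γ₁ * γ₂ * (-γ₁ - γ₂)) := shortW_equation.mp hP'.1
      by_cases hy : yP = W.negY xP yP
      · rw [add_self_of_Y_eq hy] at hP
        exact absurd hP.symm (some_ne_zero hQ)
      · rw [add_self_of_Y_ne hy] at hP
        obtain ⟨hx, -⟩ := Point.some.inj hP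
        have hyP0 : yP ≠ 0 := fun h0 => hy (by rw [hW, shortW_negY, h0, _root_.neg_zero])
        rw [hW, shortW_addX, shortW_slope (hW ▸ hy), div_pow, sub_eq_iff_eq_add,
          div_eq_iff (pow_ne_zero 2 (mul_ne_zero h2 hyP0))] at hx
        constructor
        · refine ⟨(xP ^ 2 - 2 * γ₁ * xP - γ₁ ^ 2 + γ₁ * γ₂ + γ₂ ^ 2) / (2 * yP), ?_⟩
          rw [div_pow, div_eq_iff (pow_ne_zero 2 (mul_ne_zero h2 hyP0))]
          linear_combination hx + (8 * xP + 4 * γ₁) * heqP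
        · refine ⟨(xP ^ 2 - 2 * γ₂ * xP - γ₂ ^ 2 + γ₁ * γ₂ + γ₁ ^ 2) / (2 * yP), ?_⟩
          rw [div_pow, div_eq_iff (pow_ne_zero 2 (mul_ne_zero h2 hyP0))]
          linear_combination hx + (8 * xP + 4 * γ₂) * heqP
  · -- backward direction
    rintro ⟨⟨u, hu⟩, ⟨v, hv⟩⟩
    have hprod : yQ ^ 2 = (xQ - γ₁) * (xQ - γ₂) * (xQ + γ₁ + γ₂) := by linear_combination heqQ
    have hu0 : u ≠ 0 := by
      intro h; subst h
      refine hyQ (pow_eq_zero_iff (n := 2) (by norm_num) |>.mp ?_)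
      rw [hprod]; linear_combination (-(xQ - γ₂) * (xQ + γ₁ + γ₂)) * hu
    have hv0 : v ≠ 0 := by
      intro h; subst h
      refine hyQ (pow_eq_zero_iff (n := 2) (by norm_num) |>.mp ?_)
      rw [hprod]; linear_combination (-(xQ - γ₁) * (xQ + γ₁ + γ₂)) * hv
    set w : k := yQ / (u * v) with hwdef
    have hw : w ^ 2 = xQ + γ₁ + γ₂ := by
      rw [hwdef, div_pow, div_eq_iff (pow_ne_zero 2 (mul_ne_zero hu0 hv0))]
      linear_combination hprod - (xQ + γ₁ + γ₂) * (xQ - γ₂) * hu - (xQ + γ₁ + γ₂) * u ^ 2 * hv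
    have huv : u + v ≠ 0 := fun h => hd12 (by linear_combination hu - hv + (v - u) * h)
    have hvw : v + w ≠ 0 := fun h => hd23 (by linear_combination hv - hw + (w - v) * h)
    have hwu : w + u ≠ 0 := fun h => hd13 (by linear_combination hu - hw + (w - u) * h)
    set xP : k := xQ + u * v + v * w + w * u with hxP
    set yP : k := (u + v) * ((v + w) * (w + u)) with hyP
    have hyP0 : yP ≠ 0 := mul_ne_zero huv (mul_ne_zero hvw hwu)
    have heqP : W.Equation xP yP := by
      rw [hW, shortW_equation, hxP, hyP]
      linear_combination ((-1)*w^2*γ₁ + (-2)*w^2*xQ + (1)*w^4 + (-2)*v*w*γ₁ + (-4)*v*w*xQ + (3)*v*w^3 + (-1)*v^2*γ₁ + (-2)*v^2*xQ + (4)*v^2*w^2 + (3)*v^3*w + (1)*v^4 + (1)*u*w^3 + (3)*u*v*w^2 + (3)*u*v^2*w + (1)*u*v^3 + (1)*u^2*w^2 + (2)*u^2*v*w + (1)*u^2*v^2) * hu + ((1)*γ₁*γ₂ + (1)*γ₁^2 + (-1)*xQ*γ₂ + (-1)*xQ^2 + (-1)*w^2*γ₂ + (-4)*w^2*γ₁ +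 (2)*w^2*xQ + (1)*w^4 + (-3)*v*w*γ₁ + (3)*v*w*xQ + (1)*v*w^3 + (-1)*v^2*γ₁ + (1)*v^2*xQ + (1)*v^2*w^2 + (-2)*u*w*γ₂ + (-3)*u*w*γ₁ + (-1)*u*w*xQ + (3)*u*w^3 + (-1)*u*v*γ₁ + (1)*u*v*xQ + (3)*u*v*w^2 + (2)*u*v^2*w) * hv + ((2)*γ₁*γ₂ + (-2)*xQ*γ₂ + (-2)*xQ*γ₁ + (2)*xQ^2 + (-1)*w^2*γ₂ + (-1)*w^2*γ₁ + (2)*w^2*xQ + (-1)*v*w*γ₂ + (-3)*v*w*γ₁ + (4)*v*w*xQ + (-3)*u*w*γ₂ + (-1)*u*w*γ₁ + (4)*u*w*xQ + (-1)*u*v*γ₂ + (-1)*u*v*γ₁ + (2)*u*v*xQ + (2)*u*v*w^2) * hw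
    have hPns : W.Nonsingular xP yP := (equation_iff_nonsingular_of_Δ_ne_zero hΔW).mp heqP
    have hyne : yP ≠ W.negY xP yP := by
      rw [hW, shortW_negY]
      intro h
      rcases mul_eq_zero.mp (show (2 : k) * yP = 0 by linear_combination h) with h' | h'
      exacts [h2 h', hyP0 h']
    have hx : W.addX xP xP (W.slope xP xP yP yP) = xQ := by
      rw [hW, shortW_addX, shortW_slope (hW ▸ hyne), div_pow, sub_eq_iff_eq_add,
        div_eq_iff (pow_ne_zero 2 (mul_ne_zero h2 hyP0)), hxP, hyP]
      linear_combination ((-6)*w^2*γ₂^2 + (-6)*w^2*γ₁*γ₂ + (-6)*w^2*γ₁^2 + (12)*w^2*xQ*γ₁ + (42)*w^2*xQ^2 + (7)*w^4*γ₁ + (-19)*w^4*xQ + (-12)*v*w*γ₂^2 + (-12)*v*w*γ₁*γ₂ + (-12)*v*w*γ₁^2 + (24)*v*w*xQ*γ₁ + (84)*v*w*xQ^2 + (36)*v*w^3*γ₁ + (-24)*v*w^5 + (-6)*v^2*γ₂^2 + (-6)*v^2*γ₁*γ₂ + (-6)*v^2*γ₁^2 + (12)*v^2*xQ*γ₁ +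 (42)*v^2*xQ^2 + (58)*v^2*w^2*γ₁ + (38)*v^2*w^2*xQ + (-58)*v^2*w^4 + (36)*v^3*w*γ₁ + (-68)*v^3*w^3 + (7)*v^4*γ₁ + (-19)*v^4*xQ + (-58)*v^4*w^2 + (-24)*v^5*w + (8)*u*w^3*γ₁ + (4)*u*w^3*xQ + (-8)*u*w^5 + (24)*u*v*w^2*γ₁ + (12)*u*v*w^2*xQ + (-36)*u*v*w^4 + (24)*u*v^2*w*γ₁ + (12)*u*v^2*w*xQ + (-68)*u*v^2*w^3 + (8)*u*v^3*γ₁ + (4)*u*v^3*xQ + (-68)*u*v^3*w^2 + (-36)*u*v^4*w + (-8)*u*v^5 + (-12)*u^2*w^2*xQ + (-7)*u^2*w^4 + (-24)*u^2*v*w*xQ + (-36)*u^2*v*w^3 + (-12)*u^2*v^2*xQ + (-58)*u^2*v^2*w^2 + (-36)*u^2*v^3*w + (-7)*u^2*v^4 + (-8)*u^3*w^3 + (-24)*u^3*v*w^2 + (-24)*u^3*v^2*w + (-8)*u^3*v^3) * hu + ((6)*γ₁*γ₂^2 + (13)*γ₁^2*γ₂ + (6)*γ₁^3 + (-6)*xQ*γ₂^2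 + (-32)*xQ*γ₁*γ₂ + (-25)*xQ*γ₁^2 + (19)*xQ^2*γ₂ + (-4)*xQ^2*γ₁ + (23)*xQ^3 + (-6)*w^2*γ₂^2 + (-64)*w^2*γ₁*γ₂ + (-64)*w^2*γ₁^2 + (70)*w^2*xQ*γ₂ + (78)*w^2*xQ*γ₁ + (22)*w^2*xQ^2 + (7)*w^4*γ₂ + (58)*w^4*γ₁ + (-77)*w^4*xQ + (-24)*v*w*γ₁*γ₂ + (-36)*v*w*γ₁^2 + (24)*v*w*xQ*γ₂ + (60)*v*w*xQ*γ₁ + (-24)*v*w*xQ^2 + (8)*v*w^3*γ₂ + (68)*v*w^3*γ₁ + (-64)*v*w^3*xQ + (-8)*v*w^5 + (-7)*v^2*γ₁^2 + (26)*v^2*xQ*γ₁ + (-19)*v^2*xQ^2 + (58)*v^2*w^2*γ₁ + (-70)*v^2*w^2*xQ + (-7)*v^2*w^4 + (24)*v^3*w*γ₁ + (-24)*v^3*w*xQ + (-8)*v^3*w^3 + (-12)*u*w*γ₂^2 + (-48)*u*w*γ₁*γ₂ + (-36)*u*w*γ₁^2 + (60)*u*w*xQ*γ₂ + (48)*u*w*xQ*γ₁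 + (60)*u*w*xQ^2 + (36)*u*w^3*γ₂ + (68)*u*w^3*γ₁ + (-68)*u*w^3*xQ + (-24)*u*w^5 + (-8)*u*v*γ₁*γ₂ + (-8)*u*v*γ₁^2 + (8)*u*v*xQ*γ₂ + (12)*u*v*xQ*γ₁ + (-4)*u*v*xQ^2 + (24)*u*v*w^2*γ₂ + (68)*u*v*w^2*γ₁ + (-56)*u*v*w^2*xQ + (-36)*u*v*w^4 + (36)*u*v^2*w*γ₁ + (-60)*u*v^2*w*xQ + (-36)*u*v^2*w^3 + (8)*u*v^3*γ₁ + (-8)*u*v^3*xQ + (-24)*u*v^3*w^2) * hv + ((-1)*γ₂^3 + (5)*γ₁*γ₂^2 + (5)*γ₁^2*γ₂ + (-1)*γ₁^3 + (-5)*xQ*γ₂^2 + (-38)*xQ*γ₁*γ₂ + (-5)*xQ*γ₁^2 + (36)*xQ^2*γ₂ + (36)*xQ^2*γ₁ + (-32)*xQ^3 + (-7)*w^2*γ₂^2 + (-58)*w^2*γ₁*γ₂ + (-7)*w^2*γ₁^2 + (84)*w^2*xQ*γ₂ + (84)*w^2*xQ*γ₁ + (-96)*w^2*xQ^2 + (-36)*v*w*γ₁*γ₂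 + (-12)*v*w*γ₁^2 + (48)*v*w*xQ*γ₂ + (96)*v*w*xQ*γ₁ + (-96)*v*w*xQ^2 + (8)*v*w^3*γ₂ + (24)*v*w^3*γ₁ + (-32)*v*w^3*xQ + (-12)*u*w*γ₂^2 + (-36)*u*w*γ₁*γ₂ + (96)*u*w*xQ*γ₂ + (48)*u*w*xQ*γ₁ + (-96)*u*w*xQ^2 + (24)*u*w^3*γ₂ + (8)*u*w^3*γ₁ + (-32)*u*w^3*xQ + (-8)*u*v*γ₁*γ₂ + (20)*u*v*xQ*γ₂ + (20)*u*v*xQ*γ₁ + (-32)*u*v*xQ^2 + (36)*u*v*w^2*γ₂ + (36)*u*v*w^2*γ₁ + (-96)*u*v*w^2*xQ) * hw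
    have hadd := add_self_of_Y_ne (h₁ := hPns) hyne
    rcases Y_eq_of_X_eq (nonsingular_add hPns hPns fun h => hyne h.2).1 hQ.1 hx with hyy | hyy
    · exact ⟨Point.some _ _ hPns, by rw [two_nsmul, hadd]; exact some_eq_some hx hyy⟩
    · refine ⟨-Point.some _ _ hPns, ?_⟩
      rw [two_nsmul, ← neg_add, hadd, neg_some]
      exact some_eq_some hx (by rw [hx, hyy]; exact W.negY_negY xQ yQ)
end

section
/- Let W = (γ, δ) ∈ E(k) be a point of order 3 (so δ ≠ 0), with tangent slope m = (3γ² + a)/(2δ) and Miller function h_W(x, y) = y − δ − m·(x − γ). If P and Q = (x_Q, y_Q) are affine points of E(k) with 3•P = Q, then h_W(−Q) = −y_Q − δ − m·(x_Q − γ) is a cube in k. -/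
set_option maxHeartbeats 1600000

private lemma stmt8_three_nsmul {G : Type*} [AddCommGroup G] (P : G) :
    (3 : ℕ) • P = P + P + P := by
  rw [show (3:ℕ) = 2 + 1 from rfl, succ_nsmul, two_nsmul]

private lemma stmt8_nsmul_neg {G : Type*} [AddCommGroup G] (P : G) :
    (3 : ℕ) • (-P) = -((3 : ℕ) • P) := by
  rw [stmt8_three_nsmul, stmt8_three_nsmul]; abel

open WeierstrassCurve.Affine Point in
private lemma stmt8_some_congr {k : Type*} [Field k] {W : WeierstrassCurve.Affine k}
    {x1 y1 x2 y2 : k} {h1 : W.Nonsingular x1 y1} {h2 : W.Nonsingular x2 y2}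
    (hx : x1 = x2) (hy : y1 = y2) : Point.some _ _ h1 = Point.some _ _ h2 := by
  subst hx; subst hy; rfl

/-- Tangent line at the 3-torsion point W = (g,d): h_W(x,y)·h_W(x,-y) = -(x-g)³. -/
private lemma stmt8_L1 {k : Type*} [Field k] (a b g d m x y : k)
    (e : y^2 = x^3 + a*x + b) (g2 : d^2 = g^3 + a*g + b)
    (g3 : m*(2*d) = 3*g^2 + a) (g4 : m^2 = 3*g) :
    (y - d - m*(x - g)) * (-y - d - m*(x - g)) = -(x - g)^3 := by
  linear_combination (-1 : k) * e + g2 + (x - g) * g3 + (x - g)^2 * g4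

/-- Tangent (doubling) step: h_W(P)²·h_W(-2P) = (y1 - d + l(g - x1))³. -/
private lemma stmt8_A1 {k : Type*} [Field k] (h2 : (2:k) ≠ 0) (h3 : (3:k) ≠ 0)
    (a b g d m x1 y1 l : k)
    (e1 : y1^2 = x1^3 + a*x1 + b) (g2 : d^2 = g^3 + a*g + b)
    (g3 : m*(2*d) = 3*g^2 + a) (g4 : m^2 = 3*g)
    (hl : l*(2*y1) = 3*x1^2 + a) (hy1 : y1 ≠ 0) :
    (y1 - d - m*(x1 - g))^2 * ((y1 + l*((l^2 - 2*x1) - x1)) - d - m*((l^2 - 2*x1) - g))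
      = (y1 - d + l*(g - x1))^3 := by
  have h27 : (27:k) ≠ 0 := by
    intro h
    apply h3
    have h9 : (9:k) ≠ 0 := fun h9 => h3 (by
      rcases mul_eq_zero.mp (show (3:k)*3 = 0 by linear_combination h9) with h|h <;> exact h)
    rcases mul_eq_zero.mp (show (3:k)*9 = 0 by linear_combination h) with h'|h'
    · exact h'
    · exact absurd h' h9
  apply mul_right_cancel₀ (mul_ne_zero (pow_ne_zero 3 (mul_ne_zero h2 hy1)) h27)
  linear_combination (norm := ring1) ((729)*x1^6 + (-1458)*m*x1^4*y1 + (972)*m^2*x1^2*y1^2 + (-216)*m^3*y1^3 + (-243)*m^4*x1^4 + (324)*m^5*x1^2*y1 + (-108)*m^6*y1^2 + (27)*m^8*x1^2 + (-18)*m^9*y1 + (-1)*m^12 + (1458)*d*m*x1^4 + (-1944)*d*m^2*x1^2*y1 + (648)*d*m^3*y1^2 + (-324)*d*m^5*x1^2 + (216)*d*m^6*y1 + (18)*d*m^9 + (972)*d^2*m^2*x1^2 + (-648)*d^2*m^3*y1 + (-108)*d^2*m^6 + (216)*d^3*m^3) * g2 + ((243)*x1^4*y1^2 + (-324)*m*x1^2*y1^3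 + (648)*m^2*x1^3*y1^2 + (-729)*m^2*x1^6 + (-216)*m^3*x1*y1^3 + (324)*m^3*x1^4*y1 + (-243)*m^4*x1^5 + (324)*m^5*x1^3*y1 + (-108)*m^6*x1*y1^2 + (27)*m^8*x1^3 + (-18)*m^9*x1*y1 + (-1)*m^12*x1 + (486)*d*x1^4*y1 + (-162)*d*m*x1^2*y1^2 + (-486)*d*m*x1^5 + (108)*d*m^2*y1^3 + (-324)*d*m^2*x1^3*y1 + (432)*d*m^3*x1*y1^2 + (-486)*d*m^3*x1^4 + (108)*d*m^4*x1^2*y1 + (-324)*d*m^5*x1^3 + (216)*d*m^6*x1*y1 + (18)*d*m^9*x1 + (-729)*d^2*x1^4 + (972)*d^2*m*x1^2*y1 + (-324)*d^2*m^2*y1^2 + (-108)*d^2*m^2*x1^3 + (-216)*d^2*m^3*x1*y1 + (-108)*d^2*m^4*x1^2 + (-108)*d^2*m^6*x1 + (-486)*d^3*m*x1^2 + (324)*d^3*m^2*y1 + (-108)*d^4*m^2 + (324)*g*y1^4 + (-1944)*g*x1^3*y1^2 + (1458)*g*x1^6 + (648)*g*m*x1*y1^3 + (-972)*g*m^2*x1^2*y1^2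 + (1458)*g*m^2*x1^5 + (216)*g*m^3*y1^3 + (-648)*g*m^3*x1^3*y1 + (243)*g*m^4*x1^4 + (-324)*g*m^5*x1^2*y1 + (108)*g*m^6*y1^2 + (-27)*g*m^8*x1^2 + (18)*g*m^9*y1 + (1)*g*m^12 + (-648)*g*d*y1^3 + (1944)*g*d*x1^3*y1 + (-1296)*g*d*m*x1*y1^2 + (1458)*g*d*m*x1^4 + (324)*g*d*m^2*x1^2*y1 + (-432)*g*d*m^3*y1^2 + (972)*g*d*m^3*x1^3 + (-216)*g*d*m^4*x1*y1 + (324)*g*d*m^5*x1^2 + (-216)*g*d*m^6*y1 + (-18)*g*d*m^9 + (324)*g*d^2*y1^2 + (648)*g*d^2*m*x1*y1 + (324)*g*d^2*m^2*x1^2 + (216)*g*d^2*m^3*y1 + (216)*g*d^2*m^4*x1 + (108)*g*d^2*m^6 + (1215)*g^2*x1^2*y1^2 + (-1458)*g^2*x1^5 + (-162)*g^2*m*y1^3 + (-1458)*g^2*m*x1^3*y1 + (648)*g^2*m^2*x1*y1^2 + (162)*g^2*m^3*x1^2*y1 + (-1944)*g^2*d*x1^2*y1 + (972)*g^2*d*m*y1^2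 + (324)*g^2*d*m*x1^3 + (-972)*g^2*d*m^2*x1*y1 + (-162)*g^2*d*m^3*x1^2 + (108)*g^2*d*m^4*y1 + (729)*g^2*d^2*x1^2 + (-1134)*g^2*d^2*m*y1 + (324)*g^2*d^2*m^2*x1 + (-108)*g^2*d^2*m^4 + (324)*g^2*d^3*m + (972)*g^3*x1*y1^2 + (-1458)*g^3*x1^4 + (1458)*g^3*m*x1^2*y1 + (-324)*g^3*m^2*y1^2 + (-1458)*g^3*m^2*x1^3 + (324)*g^3*m^3*x1*y1 + (-972)*g^3*d*x1*y1 + (-1944)*g^3*d*m*x1^2 + (972)*g^3*d*m^2*y1 + (-648)*g^3*d*m^3*x1 + (-540)*g^3*d^2*m^2 + (-729)*g^4*y1^2 + (1944)*g^4*x1^3 + (486)*g^4*m*x1*y1 + (486)*g^4*m^2*x1^2 + (-162)*g^4*m^3*y1 + (972)*g^4*d*y1 + (486)*g^4*d*m*x1 + (324)*g^4*d*m^3 + (-243)*g^4*d^2 + (-486)*g^5*m*y1 + (486)*g^5*m^2*x1 + (162)*g^5*d*m + (-729)*g^6*x1 + (-243)*g^6*m^2 + (243)*g^7 + (-81)*a*x1^2*y1^2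 + (-243)*a*x1^5 + (54)*a*m*y1^3 + (486)*a*m*x1^3*y1 + (-108)*a*m^2*x1*y1^2 + (-243)*a*m^2*x1^4 + (54)*a*m^3*x1^2*y1 + (324)*a*d*x1^2*y1 + (-162)*a*d*m*y1^2 + (-540)*a*d*m*x1^3 + (216)*a*d*m^2*x1*y1 + (-54)*a*d*m^3*x1^2 + (-243)*a*d^2*x1^2 + (162)*a*d^2*m*y1 + (-108)*a*d^2*m^2*x1 + (-54)*a*d^3*m + (-324)*a*g*x1*y1^2 + (729)*a*g*x1^4 + (-486)*a*g*m*x1^2*y1 + (108)*a*g*m^2*y1^2 + (486)*a*g*m^2*x1^3 + (-108)*a*g*m^3*x1*y1 + (324)*a*g*d*x1*y1 + (648)*a*g*d*m*x1^2 + (-216)*a*g*d*m^2*y1 + (108)*a*g*d*m^3*x1 + (108)*a*g*d^2*m^2 + (243)*a*g^2*y1^2 + (-648)*a*g^2*x1^3 + (-162)*a*g^2*m*x1*y1 + (-162)*a*g^2*m^2*x1^2 + (54)*a*g^2*m^3*y1 + (-324)*a*g^2*d*y1 + (-54)*a*g^2*d*m^3 + (81)*a*g^2*d^2 + (162)*a*g^3*m*y1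 + (-162)*a*g^3*m^2*x1 + (-108)*a*g^3*d*m + (243)*a*g^4*x1 + (81)*a*g^4*m^2 + (-81)*a*g^5 + (-27)*a^2*y1^2 + (-27)*a^2*x1^3 + (54)*a^2*m*x1*y1 + (-27)*a^2*m^2*x1^2 + (54)*a^2*d*y1 + (-54)*a^2*d*m*x1 + (-27)*a^2*d^2 + (81)*a^2*g*x1^2 + (-54)*a^2*g*m*y1 + (54)*a^2*g*m^2*x1 + (54)*a^2*g*d*m + (-81)*a^2*g^2*x1 + (-27)*a^2*g^2*m^2 + (27)*a^2*g^3) * g3 + ((324)*x1^2*y1^4 + (-972)*x1^5*y1^2 + (729)*x1^8 + (-216)*m*y1^5 + (648)*m*x1^3*y1^3 + (-486)*m*x1^6*y1 + (-243)*m^2*x1^4*y1^2 + (243)*m^2*x1^7 + (324)*m^3*x1^2*y1^3 + (-324)*m^3*x1^5*y1 + (-108)*m^4*y1^4 + (108)*m^4*x1^3*y1^2 + (27)*m^6*x1^2*y1^2 + (-27)*m^6*x1^5 + (-18)*m^7*y1^3 + (18)*m^7*x1^3*y1 + (-1)*m^10*y1^2 + (1)*m^10*x1^3 + (-648)*d*x1^2*y1^3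 + (972)*d*x1^5*y1 + (648)*d*m*y1^4 + (-1944)*d*m*x1^3*y1^2 + (1458)*d*m*x1^6 + (432)*d*m^2*x1*y1^3 + (-648)*d*m^2*x1^4*y1 + (-324)*d*m^3*x1^2*y1^2 + (810)*d*m^3*x1^5 + (216)*d*m^4*y1^3 + (-864)*d*m^4*x1^3*y1 + (216)*d*m^5*x1*y1^2 + (18)*d*m^7*y1^2 + (-72)*d*m^7*x1^3 + (36)*d*m^8*x1*y1 + (2)*d*m^11*x1 + (324)*d^2*x1^2*y1^2 + (-648)*d^2*m*y1^3 + (1296)*d^2*m*x1^3*y1 + (-864)*d^2*m^2*x1*y1^2 + (1215)*d^2*m^2*x1^4 + (-540)*d^2*m^3*x1^2*y1 + (756)*d^2*m^4*x1^3 + (-432)*d^2*m^5*x1*y1 + (-27)*d^2*m^6*x1^2 + (18)*d^2*m^7*y1 + (-36)*d^2*m^8*x1 + (1)*d^2*m^10 + (216)*d^3*m*y1^2 + (432)*d^3*m^2*x1*y1 + (540)*d^3*m^3*x1^2 + (-216)*d^3*m^4*y1 + (216)*d^3*m^5*x1 + (-18)*d^3*m^7 + (108)*d^4*m^4 + (243)*g*x1^4*y1^2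 + (-729)*g*x1^7 + (324)*g*m*x1^2*y1^3 + (-324)*g*m^2*y1^4 + (324)*g*m^2*x1^3*y1^2 + (81)*g*m^4*x1^2*y1^2 + (-81)*g*m^4*x1^5 + (-54)*g*m^5*y1^3 + (54)*g*m^5*x1^3*y1 + (-3)*g*m^8*y1^2 + (3)*g*m^8*x1^3 + (-972)*g*d*x1^4*y1 + (972)*g*d*m*x1^2*y1^2 + (-486)*g*d*m*x1^5 + (216)*g*d*m^2*y1^3 + (-1296)*g*d*m^2*x1^3*y1 + (648)*g*d*m^3*x1*y1^2 + (-486)*g*d*m^3*x1^4 + (648)*g*d*m^4*x1^2*y1 + (-162)*g*d*m^5*y1^2 + (-216)*g*d*m^5*x1^3 + (108)*g*d*m^6*x1*y1 + (54)*g*d*m^7*x1^2 + (-36)*g*d*m^8*y1 + (6)*g*d*m^9*x1 + (-2)*g*d*m^11 + (729)*g*d^2*x1^4 + (-2268)*g*d^2*m*x1^2*y1 + (864)*g*d^2*m^2*y1^2 + (324)*g*d^2*m^2*x1^3 + (-864)*g*d^2*m^3*x1*y1 + (-729)*g*d^2*m^4*x1^2 + (486)*g*d^2*m^5*y1 + (-108)*g*d^2*m^6*x1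 + (39)*g*d^2*m^8 + (972)*g*d^3*m*x1^2 + (-1080)*g*d^3*m^2*y1 + (216)*g*d^3*m^3*x1 + (-270)*g*d^3*m^5 + (324)*g*d^4*m^2 + (-324)*g^2*y1^4 + (1944)*g^2*x1^3*y1^2 + (-1458)*g^2*x1^6 + (-648)*g^2*m*x1*y1^3 + (486)*g^2*m*x1^4*y1 + (243)*g^2*m^2*x1^2*y1^2 + (-972)*g^2*m^2*x1^5 + (-162)*g^2*m^3*y1^3 + (1134)*g^2*m^3*x1^3*y1 + (-324)*g^2*m^4*x1*y1^2 + (-9)*g^2*m^6*y1^2 + (90)*g^2*m^6*x1^3 + (-54)*g^2*m^7*x1*y1 + (-3)*g^2*m^10*x1 + (648)*g^2*d*y1^3 + (-1944)*g^2*d*x1^3*y1 + (1944)*g^2*d*m*x1*y1^2 + (-2916)*g^2*d*m*x1^4 + (1944)*g^2*d*m^2*x1^2*y1 + (-486)*g^2*d*m^3*y1^2 + (-1620)*g^2*d*m^3*x1^3 + (972)*g^2*d*m^4*x1*y1 + (162)*g^2*d*m^5*x1^2 + (-108)*g^2*d*m^6*y1 + (72)*g^2*d*m^7*x1 + (-6)*g^2*d*m^9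 + (-324)*g^2*d^2*y1^2 + (-1296)*g^2*d^2*m*x1*y1 + (-2187)*g^2*d^2*m^2*x1^2 + (1242)*g^2*d^2*m^3*y1 + (-648)*g^2*d^2*m^4*x1 + (117)*g^2*d^2*m^6 + (-594)*g^2*d^3*m^3 + (-1215)*g^3*x1^2*y1^2 + (1458)*g^3*x1^5 + (162)*g^3*m*y1^3 + (1458)*g^3*m*x1^3*y1 + (-972)*g^3*m^2*x1*y1^2 + (486)*g^3*m^2*x1^4 + (-648)*g^3*m^3*x1^2*y1 + (189)*g^3*m^4*y1^2 + (270)*g^3*m^4*x1^3 + (-162)*g^3*m^5*x1*y1 + (-54)*g^3*m^6*x1^2 + (36)*g^3*m^7*y1 + (-9)*g^3*m^8*x1 + (2)*g^3*m^10 + (1944)*g^3*d*x1^2*y1 + (-1458)*g^3*d*m*y1^2 + (972)*g^3*d*m*x1^3 + (1620)*g^3*d*m^2*x1*y1 + (1134)*g^3*d*m^3*x1^2 + (-756)*g^3*d*m^4*y1 + (216)*g^3*d*m^5*x1 + (-54)*g^3*d*m^7 + (-729)*g^3*d^2*x1^2 + (1782)*g^3*d^2*m*y1 + (567)*g^3*d^2*m^4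 + (-486)*g^3*d^3*m + (-972)*g^4*x1*y1^2 + (1458)*g^4*x1^4 + (-1458)*g^4*m*x1^2*y1 + (567)*g^4*m^2*y1^2 + (810)*g^4*m^2*x1^3 + (-486)*g^4*m^3*x1*y1 + (-162)*g^4*m^4*x1^2 + (108)*g^4*m^5*y1 + (-27)*g^4*m^6*x1 + (6)*g^4*m^8 + (972)*g^4*d*x1*y1 + (1944)*g^4*d*m*x1^2 + (-1620)*g^4*d*m^2*y1 + (648)*g^4*d*m^3*x1 + (-162)*g^4*d*m^5 + (729)*g^4*d^2*m^2 + (729)*g^5*y1^2 + (-1944)*g^5*x1^3 + (-486)*g^5*m*x1*y1 + (-486)*g^5*m^2*x1^2 + (324)*g^5*m^3*y1 + (-81)*g^5*m^4*x1 + (18)*g^5*m^6 + (-972)*g^5*d*y1 + (-972)*g^5*d*m*x1 + (-486)*g^5*d*m^3 + (243)*g^5*d^2 + (486)*g^6*m*y1 + (-243)*g^6*m^2*x1 + (54)*g^6*m^4 + (729)*g^7*x1 + (162)*g^7*m^2 + (-243)*g^8) * g4 + ((-729)*x1^6 + (1458)*m*x1^4*y1 + (-972)*m^2*x1^2*y1^2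 + (216)*m^3*y1^3 + (243)*m^4*x1^4 + (-324)*m^5*x1^2*y1 + (108)*m^6*y1^2 + (-27)*m^8*x1^2 + (18)*m^9*y1 + (1)*m^12 + (-1458)*d*m*x1^4 + (1944)*d*m^2*x1^2*y1 + (-648)*d*m^3*y1^2 + (324)*d*m^5*x1^2 + (-216)*d*m^6*y1 + (-18)*d*m^9 + (-972)*d^2*m^2*x1^2 + (648)*d^2*m^3*y1 + (108)*d^2*m^6 + (-216)*d^3*m^3) * e1 + ((108)*y1^4*l^2 + (-162)*x1^2*y1^3*l + (108)*x1^3*y1^2*l^2 + (-243)*x1^4*y1^2 + (162)*x1^5*y1*l + (243)*x1^7 + (-108)*m*y1^4*l + (-216)*m*x1*y1^3*l^2 + (486)*m*x1^2*y1^3 + (-324)*m*x1^3*y1^2*l + (-486)*m*x1^5*y1 + (216)*m^2*x1*y1^3*l + (108)*m^2*x1^2*y1^2*l^2 + (162)*m^2*x1^4*y1*l + (243)*m^2*x1^6 + (-108)*m^3*x1^2*y1^2*l + (-162)*m^3*x1^4*y1 + (-216)*d*y1^3*l^2 + (216)*d*m*y1^3*l + (216)*d*m*x1*y1^2*l^2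 + (-324)*d*m*x1^2*y1^2 + (324)*d*m*x1^3*y1*l + (486)*d*m*x1^5 + (-216)*d*m^2*x1*y1^2*l + (-324)*d*m^2*x1^3*y1 + (108)*d^2*y1^2*l^2 + (162)*d^2*x1^2*y1*l + (243)*d^2*x1^4 + (-108)*d^2*m*y1^2*l + (-162)*d^2*m*x1^2*y1 + (-324)*g*y1^4 + (648)*g*x1*y1^3*l + (-324)*g*x1^2*y1^2*l^2 + (972)*g*x1^3*y1^2 + (-486)*g*x1^4*y1*l + (-729)*g*x1^6 + (216)*g*m*y1^3*l^2 + (-648)*g*m*x1*y1^3 + (324)*g*m*x1^2*y1^2*l + (486)*g*m*x1^4*y1 + (-216)*g*m^2*y1^3*l + (-216)*g*m^2*x1*y1^2*l^2 + (324)*g*m^2*x1^2*y1^2 + (-324)*g*m^2*x1^3*y1*l + (-486)*g*m^2*x1^5 + (216)*g*m^3*x1*y1^2*l + (324)*g*m^3*x1^3*y1 + (648)*g*d*y1^3 + (-648)*g*d*x1*y1^2*l + (-972)*g*d*x1^3*y1 + (-216)*g*d*m*y1^2*l^2 + (648)*g*d*m*x1*y1^2 + (-324)*g*d*m*x1^2*y1*l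 + (-486)*g*d*m*x1^4 + (216)*g*d*m^2*y1^2*l + (324)*g*d*m^2*x1^2*y1 + (-324)*g*d^2*y1^2 + (-324)*g^2*y1^3*l + (324)*g^2*x1*y1^2*l^2 + (-486)*g^2*x1^2*y1^2 + (486)*g^2*x1^3*y1*l + (729)*g^2*x1^5 + (108)*g^2*m^2*y1^2*l^2 + (-324)*g^2*m^2*x1*y1^2 + (162)*g^2*m^2*x1^2*y1*l + (243)*g^2*m^2*x1^4 + (-108)*g^2*m^3*y1^2*l + (-162)*g^2*m^3*x1^2*y1 + (324)*g^2*d*y1^2*l + (486)*g^2*d*x1^2*y1 + (-108)*g^3*y1^2*l^2 + (-162)*g^3*x1^2*y1*l + (-243)*g^3*x1^4 + (54)*a*y1^3*l + (54)*a*x1^3*y1*l + (162)*a*x1^5 + (-54)*a*m*y1^3 + (-108)*a*m*x1*y1^2*l + (-324)*a*m*x1^3*y1 + (108)*a*m^2*x1*y1^2 + (54)*a*m^2*x1^2*y1*l + (162)*a*m^2*x1^4 + (-54)*a*m^3*x1^2*y1 + (-108)*a*d*y1^2*l + (-162)*a*d*x1^2*y1 + (108)*a*d*m*y1^2 + (108)*a*d*m*x1*y1*l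 + (324)*a*d*m*x1^3 + (-108)*a*d*m^2*x1*y1 + (54)*a*d^2*y1*l + (162)*a*d^2*x1^2 + (-54)*a*d^2*m*y1 + (324)*a*g*x1*y1^2 + (-162)*a*g*x1^2*y1*l + (-486)*a*g*x1^4 + (108)*a*g*m*y1^2*l + (324)*a*g*m*x1^2*y1 + (-108)*a*g*m^2*y1^2 + (-108)*a*g*m^2*x1*y1*l + (-324)*a*g*m^2*x1^3 + (108)*a*g*m^3*x1*y1 + (-324)*a*g*d*x1*y1 + (-108)*a*g*d*m*y1*l + (-324)*a*g*d*m*x1^2 + (108)*a*g*d*m^2*y1 + (-162)*a*g^2*y1^2 + (162)*a*g^2*x1*y1*l + (486)*a*g^2*x1^3 + (54)*a*g^2*m^2*y1*l + (162)*a*g^2*m^2*x1^2 + (-54)*a*g^2*m^3*y1 + (162)*a*g^2*d*y1 + (-54)*a*g^3*y1*l + (-162)*a*g^3*x1^2 + (27)*a^2*y1^2 + (27)*a^2*x1^3 + (-54)*a^2*m*x1*y1 + (27)*a^2*m^2*x1^2 + (-54)*a^2*d*y1 + (54)*a^2*d*m*x1 + (27)*a^2*d^2 + (-81)*a^2*g*x1^2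 + (54)*a^2*g*m*y1 + (-54)*a^2*g*m^2*x1 + (-54)*a^2*g*d*m + (81)*a^2*g^2*x1 + (27)*a^2*g^2*m^2 + (-27)*a^2*g^3) * hl

/-- Chord step: h_W(R)·h_W(S)·h_W(-(R+S)) = (y1 - d + lam(g - x1))³. -/
private lemma stmt8_A2 {k : Type*} [Field k] (h3 : (3:k) ≠ 0)
    (a b g d m x1 y1 x2 y2 lam : k)
    (e1 : y1^2 = x1^3 + a*x1 + b) (e2 : y2^2 = x2^3 + a*x2 + b)
    (g2 : d^2 = g^3 + a*g + b) (g3 : m*(2*d) = 3*g^2 + a) (g4 : m^2 = 3*g)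
    (hy2 : y2 = y1 + lam*(x2 - x1)) (hx : x2 ≠ x1) :
    (y1 - d - m*(x1 - g)) * (y2 - d - m*(x2 - g)) *
      ((y1 + lam*((lam^2 - x1 - x2) - x1)) - d - m*((lam^2 - x1 - x2) - g))
      = (y1 - d + lam*(g - x1))^3 := by
  apply mul_right_cancel₀ (mul_ne_zero h3 (sub_ne_zero.mpr hx))
  linear_combination (norm := ring1) ((-3)*y1*y2*lam^2 + (-3)*y1*x2^2*lam + (-3)*y1^2*lam^2 + (3)*y1^2*x2 + (-3)*x1*y1*x2*lam + (-3)*x1*y1^2 + (6)*x1^2*y1*lam + (6)*m*y1*y2*lam + (3)*m*y1*x2*lam^2 + (3)*m*y1*x2^2 + (6)*m*y1^2*lam + (3)*m*x1*y2*lam^2 + (3)*m*x1*x2^2*lam + (-3)*m*x1*y1*x2 + (3)*m*x1^2*x2*lam + (-6)*m*x1^3*lam + (-3)*m^2*y1*y2 + (-3)*m^2*y1*x2*lam + (-3)*m^2*y1^2 + (-6)*m^2*x1*y2*lam + (-3)*m^2*x1*x2*lam^2 + (-3)*m^2*x1*x2^2 + (-3)*m^2*x1*y1*lam + (3)*m^2*x1^2*lam^2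 + (3)*m^2*x1^3 + (-1)*m^3*y2*lam^2 + (-1)*m^3*x2*lam^3 + (-1)*m^3*y1*lam^2 + (1)*m^3*x1*lam^3 + (3)*m^3*x1*y2 + (3)*m^3*x1*x2*lam + (3)*m^3*x1*y1 + (-3)*m^3*x1^2*lam + (2)*m^4*y2*lam + (2)*m^4*x2*lam^2 + (2)*m^4*y1*lam + (-2)*m^4*x1*lam^2 + (-1)*m^5*y2 + (-1)*m^5*x2*lam + (-1)*m^5*y1 + (1)*m^5*x1*lam + (3)*d*y2*lam^2 + (3)*d*x2^2*lam + (3)*d*y1*lam^2 + (-6)*d*y1*x2 + (3)*d*x1*x2*lam + (6)*d*x1*y1 + (-6)*d*x1^2*lam + (-6)*d*m*y2*lam + (-3)*d*m*x2*lam^2 + (-3)*d*m*x2^2 + (-6)*d*m*y1*lam + (3)*d*m*x1*lam^2 + (3)*d*m*x1*x2 + (3)*d*m^2*y2 + (3)*d*m^2*x2*lam + (3)*d*m^2*y1 + (-3)*d*m^2*x1*lam + (3)*d^2*x2 + (-3)*d^2*x1 + (3)*g*m*x2*lam^3 + (-3)*g*m*x2^2*lam + (6)*g*m*y1*x2 +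 (-3)*g*m*x1*lam^3 + (-3)*g*m*x1*x2*lam + (-6)*g*m*x1*y1 + (6)*g*m*x1^2*lam + (-3)*g*m^2*x2*lam^2 + (3)*g*m^2*x2^2 + (3)*g*m^2*x1*lam^2 + (-3)*g*m^2*x1*x2 + (-6)*g*d*m*x2 + (6)*g*d*m*x1 + (3)*g^2*m^2*x2 + (-3)*g^2*m^2*x1) * hy2 + ((3)*x2*lam^3 + (-3)*x1*lam^3 + (-9)*m*x2*lam^2 + (9)*m*x1*lam^2 + (9)*m^2*x2*lam + (-9)*m^2*x1*lam + (-3)*m^3*x2 + (3)*m^3*x1) * g2 + ((-3)*y1*x2*lam^2 + (3)*x1*x2*lam^3 + (3)*x1*y1*lam^2 + (-3)*x1^2*lam^3 + (6)*m*y1*x2*lam + (-6)*m*x1*x2*lam^2 + (-6)*m*x1*y1*lam + (6)*m*x1^2*lam^2 + (-3)*m^2*y1*x2 + (3)*m^2*x1*x2*lam + (3)*m^2*x1*y1 + (-3)*m^2*x1^2*lam + (-1)*m^3*x2*lam^2 + (1)*m^3*x1*lam^2 + (2)*m^4*x2*lam + (-2)*m^4*x1*lam + (-1)*m^5*x2 +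 (1)*m^5*x1 + (3)*d*x2*lam^2 + (-3)*d*x1*lam^2 + (-6)*d*m*x2*lam + (6)*d*m*x1*lam + (3)*d*m^2*x2 + (-3)*d*m^2*x1 + (-3)*g*x2*lam^3 + (3)*g*x1*lam^3 + (9)*g*m*x2*lam^2 + (-9)*g*m*x1*lam^2 + (-9)*g*m^2*x2*lam + (9)*g*m^2*x1*lam + (3)*g*m^3*x2 + (-3)*g*m^3*x1) * g3 + ((3)*y1^2*x2*lam + (-6)*x1*y1*x2*lam^2 + (-3)*x1*y1^2*lam + (3)*x1^2*x2*lam^3 + (6)*x1^2*y1*lam^2 + (-3)*x1^3*lam^3 + (-1)*m*x2^2*lam^4 + (1)*m*x2^3*lam^2 + (-2)*m*y1*x2*lam^3 + (-3)*m*y1^2*x2 + (2)*m*x1*x2*lam^4 + (2)*m*x1*y1*lam^3 + (6)*m*x1*y1*x2*lam + (3)*m*x1*y1^2 + (-1)*m*x1^2*lam^4 + (-3)*m*x1^2*x2*lam^2 + (-6)*m*x1^2*y1*lam + (2)*m*x1^3*lam^2 + (2)*m^2*x2^2*lam^3 + (-2)*m^2*x2^3*lam + (4)*m^2*y1*x2*lam^2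 + (-4)*m^2*x1*x2*lam^3 + (-4)*m^2*x1*y1*lam^2 + (2)*m^2*x1^2*lam^3 + (2)*m^2*x1^3*lam + (-1)*m^3*x2^2*lam^2 + (1)*m^3*x2^3 + (-2)*m^3*y1*x2*lam + (2)*m^3*x1*x2*lam^2 + (2)*m^3*x1*y1*lam + (-1)*m^3*x1^2*lam^2 + (-1)*m^3*x1^3 + (-6)*d*y1*x2*lam + (6)*d*x1*x2*lam^2 + (6)*d*x1*y1*lam + (-6)*d*x1^2*lam^2 + (6)*d*m*y1*x2 + (-6)*d*m*x1*x2*lam + (-6)*d*m*x1*y1 + (6)*d*m*x1^2*lam + (2)*d*m^2*x2*lam^2 + (-2)*d*m^2*x1*lam^2 + (-4)*d*m^3*x2*lam + (4)*d*m^3*x1*lam + (2)*d*m^4*x2 + (-2)*d*m^4*x1 + (3)*d^2*x2*lam + (-3)*d^2*x1*lam + (-3)*d^2*m*x2 + (3)*d^2*m*x1 + (6)*g*y1*x2*lam^2 + (-6)*g*x1*x2*lam^3 + (-6)*g*x1*y1*lam^2 + (6)*g*x1^2*lam^3 + (-6)*g*m*y1*x2*lam + (6)*g*m*x1*x2*lam^2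 + (6)*g*m*x1*y1*lam + (-6)*g*m*x1^2*lam^2 + (-6)*g*d*x2*lam^2 + (6)*g*d*x1*lam^2 + (6)*g*d*m*x2*lam + (-6)*g*d*m*x1*lam + (3)*g^2*x2*lam^3 + (-3)*g^2*x1*lam^3 + (-6)*g^2*m*x2*lam^2 + (6)*g^2*m*x1*lam^2 + (6)*g^2*m^2*x2*lam + (-6)*g^2*m^2*x1*lam + (-3)*g^2*m^3*x2 + (3)*g^2*m^3*x1) * g4 + ((3)*y1*lam^2 + (-6)*m*y1*lam + (-3)*m*x1*lam^2 + (3)*m^2*y1 + (6)*m^2*x1*lam + (1)*m^3*lam^2 + (-3)*m^3*x1 + (-2)*m^4*lam + (1)*m^5 + (-3)*d*lam^2 + (6)*d*m*lam + (-3)*d*m^2) * e2 + ((-3)*x2*lam^3 + (-3)*y1*lam^2 + (3)*x1*lam^3 + (9)*m*x2*lam^2 + (6)*m*y1*lam + (-6)*m*x1*lam^2 + (-9)*m^2*x2*lam + (-3)*m^2*y1 + (3)*m^2*x1*lam + (-1)*m^3*lam^2 + (3)*m^3*x2 + (2)*m^4*lam + (-1)*m^5 + (3)*d*lam^2 + (-6)*d*m*lam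 + (3)*d*m^2) * e1

-- A1 denominator lcm: 27
open Classical in
theorem stmt_8 {k : Type*} [Field k] (h2 : (2 : k) ≠ 0) (h3 : (3 : k) ≠ 0)
    (a b : k) (hΔ : -16 * (4 * a ^ 3 + 27 * b ^ 2) ≠ 0)
    (γ δ : k) (hW : (shortWCurve a b).Nonsingular γ δ)
    (hord : 3 • (WeierstrassCurve.Affine.Point.some _ _ hW)
        = (0 : (shortWCurve a b).Point))
    (xP yP xQ yQ : k)
    (hP : (shortWCurve a b).Nonsingular xP yP)
    (hQ : (shortWCurve a b).Nonsingular xQ yQ)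
    (hPQ : 3 • (WeierstrassCurve.Affine.Point.some _ _ hP)
        = WeierstrassCurve.Affine.Point.some _ _ hQ) :
    ∃ c : k, c ^ 3 = -yQ - δ - ((3 * γ ^ 2 + a) / (2 * δ)) * (xQ - γ) := by
  classical
  open WeierstrassCurve.Affine Point in
  -- curve convenience facts
  have hnegY : ∀ x y : k, (shortWCurve a b).negY x y = -y := fun x y => by
    simp [WeierstrassCurve.Affine.negY, shortWCurve]
  have heq : ∀ x y : k, (shortWCurve a b).Equation x y ↔ y^2 = x^3 + a*x + b := fun x y => by
    rw [WeierstrassCurve.Affine.equation_iff]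
    simp only [shortWCurve]
    constructor <;> intro h <;> linear_combination h
  have eW : δ^2 = γ^3 + a*γ + b := (heq γ δ).mp hW.1
  have eP : yP^2 = xP^3 + a*xP + b := (heq xP yP).mp hP.1
  have eQ : yQ^2 = xQ^3 + a*xQ + b := (heq xQ yQ).mp hQ.1
  -- δ ≠ 0
  have hδ : δ ≠ 0 := by
    intro h0
    have hyeq : δ = (shortWCurve a b).negY γ δ := by rw [hnegY, h0]; norm_num
    have hWW : Point.some _ _ hW + Point.some _ _ hW = 0 := Point.add_self_of_Y_eq hyeq
    have h3W : (3:ℕ) • Point.some _ _ hW = Point.some _ _ hW := by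
      rw [stmt8_three_nsmul, hWW, zero_add]
    exact Point.some_ne_zero hW (h3W.symm.trans hord)
  have h2δ : (2:k)*δ ≠ 0 := mul_ne_zero h2 hδ
  have hWy : δ ≠ (shortWCurve a b).negY γ δ := by
    rw [hnegY]
    intro hcon
    exact h2δ (by linear_combination hcon)
  -- the slope at W
  have hs : (shortWCurve a b).slope γ γ δ δ = (3*γ^2 + a)/(2*δ) := by
    rw [WeierstrassCurve.Affine.slope_of_Y_ne rfl hWy, hnegY]
    simp only [shortWCurve]
    ring_nf
  obtain ⟨m, hmdef⟩ : ∃ t : k, t = (3 * γ ^ 2 + a) / (2 * δ) := ⟨_, rfl⟩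
  rw [← hmdef]
  rw [← hmdef] at hs
  have g3 : m*(2*δ) = 3*γ^2 + a := by rw [hmdef]; exact div_mul_cancel₀ _ h2δ
  -- 2W = -W gives m² = 3γ
  have h2W := Point.add_self_of_Y_ne (h₁ := hW) hWy
  have hWW : Point.some _ _ hW + Point.some _ _ hW = -(Point.some _ _ hW) := by
    apply eq_neg_of_add_eq_zero_left
    rw [← stmt8_three_nsmul]; exact hord
  rw [h2W, Point.neg_some] at hWW
  injection hWW with hx2W hy2W
  rw [hs] at hx2W
  have g4 : m^2 = 3*γ := by
    simp only [WeierstrassCurve.Affine.addX, shortWCurve] at hx2W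
    linear_combination hx2W
  -- main case split
  rcases eq_or_ne yQ 0 with hyQ0 | hyQ0
  · -- yQ = 0 : Q is 2-torsion, h_W(-Q) = h_W(Q) and h² = -(xQ-γ)³
    have key : (-δ - m*(xQ-γ)) * (-δ - m*(xQ-γ)) = -(xQ-γ)^3 := by
      have := stmt8_L1 a b γ δ m xQ yQ eQ eW g3 g4
      rw [hyQ0] at this
      linear_combination this
    have hne : (-δ - m*(xQ-γ)) ≠ 0 := by
      intro h0
      rw [h0, mul_zero] at key
      have hx3 : (xQ - γ)^3 = 0 := by linear_combination key
      have hxγ : xQ - γ = 0 := by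
        exact pow_eq_zero_iff (by norm_num) |>.mp hx3
      exact hδ (by linear_combination -h0 - m*hxγ)
    refine ⟨(xQ-γ)^2 / (-δ - m*(xQ-γ)), ?_⟩
    rw [div_pow, div_eq_iff (pow_ne_zero 3 hne), hyQ0]
    linear_combination ((xQ-γ)^3 - (-δ - m*(xQ-γ))^2) * key
  · -- yQ ≠ 0
    have hyP : yP ≠ 0 := by
      intro h0
      have hyeq : yP = (shortWCurve a b).negY xP yP := by rw [hnegY, h0]; norm_num
      have hPP : Point.some _ _ hP + Point.some _ _ hP = 0 := Point.add_self_of_Y_eq hyeq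
      have h3P : (3:ℕ) • Point.some _ _ hP = Point.some _ _ hP := by
        rw [stmt8_three_nsmul, hPP, zero_add]
      have hPQeq : Point.some _ _ hP = Point.some _ _ hQ := h3P.symm.trans hPQ
      injection hPQeq with hx hy
      exact hyQ0 (hy ▸ h0)
    have hyPne : yP ≠ (shortWCurve a b).negY xP yP := by
      rw [hnegY]
      intro hcon
      exact hyP ((mul_eq_zero.mp (show (2:k)*yP = 0 by linear_combination hcon)).resolve_left h2)
    -- the doubling of P
    have h2Pp := Point.add_self_of_Y_ne (h₁ := hP) hyPne
    obtain ⟨l, hldef⟩ : ∃ t : k, t = (shortWCurve a b).slope xP xP yP yP := ⟨_, rfl⟩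
    have hl : l*(2*yP) = 3*xP^2 + a := by
      rw [hldef, WeierstrassCurve.Affine.slope_of_Y_ne rfl hyPne,
        show yP - (shortWCurve a b).negY xP yP = 2*yP by rw [hnegY]; ring,
        div_mul_cancel₀ _ (mul_ne_zero h2 hyP)]
      simp only [shortWCurve]
      ring
    obtain ⟨x₂, hx2def⟩ : ∃ t : k, t = l^2 - 2*xP := ⟨_, rfl⟩
    obtain ⟨y₂, hy2def⟩ : ∃ t : k, t = l*(xP - x₂) - yP := ⟨_, rfl⟩
    have haddX : (shortWCurve a b).addX xP xP ((shortWCurve a b).slope xP xP yP yP) = x₂ := by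
      rw [← hldef, hx2def]
      simp only [WeierstrassCurve.Affine.addX, shortWCurve]; ring
    have haddY : (shortWCurve a b).addY xP xP yP ((shortWCurve a b).slope xP xP yP yP) = y₂ := by
      rw [← hldef, hy2def, hx2def]
      simp only [WeierstrassCurve.Affine.addY, WeierstrassCurve.Affine.negAddY,
        WeierstrassCurve.Affine.negY, WeierstrassCurve.Affine.addX, shortWCurve]
      ring
    have hns2 : (shortWCurve a b).Nonsingular x₂ y₂ := by
      rw [← haddX, ← haddY]
      exact WeierstrassCurve.Affine.nonsingular_add hP hP (fun h => hyPne h.2)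
    have h2P : Point.some _ _ hP + Point.some _ _ hP = Point.some _ _ hns2 := by
      rw [h2Pp]; exact stmt8_some_congr haddX haddY
    have e2 : y₂^2 = x₂^3 + a*x₂ + b := (heq x₂ y₂).mp hns2.1
    have h3Pq : Point.some _ _ hns2 + Point.some _ _ hP = Point.some _ _ hQ := by
      rw [← h2P]
      rw [← stmt8_three_nsmul]
      exact hPQ
    -- x₂ ≠ xP
    have hx21 : x₂ ≠ xP := by
      intro hxx
      have hxx0 : x₂ - xP = 0 := by rw [hxx]; ring
      have hyy : (y₂ - yP)*(y₂ + yP) = 0 := by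
        linear_combination e2 - eP + (x₂^2 + x₂*xP + xP^2 + a) * hxx0
      rcases mul_eq_zero.mp hyy with h | h
      · have heq2 : Point.some _ _ hns2 = Point.some _ _ hP :=
          stmt8_some_congr hxx (sub_eq_zero.mp h)
        rw [heq2] at h2P
        exact Point.some_ne_zero hP (add_eq_right.mp h2P)
      · have hyneg : y₂ = (shortWCurve a b).negY xP yP := by
          rw [hnegY]; linear_combination h
        have hzero : Point.some _ _ hns2 + Point.some _ _ hP = 0 := Point.add_of_Y_eq hxx hyneg
        exact Point.some_ne_zero hQ (h3Pq.symm.trans hzero)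
    -- the chord slope
    obtain ⟨lam, hlamdef⟩ : ∃ t : k, t = (shortWCurve a b).slope x₂ xP y₂ yP := ⟨_, rfl⟩
    have hlam : lam*(x₂ - xP) = y₂ - yP := by
      rw [hlamdef, WeierstrassCurve.Affine.slope_of_X_ne hx21]
      exact div_mul_cancel₀ _ (sub_ne_zero.mpr hx21)
    have hy2lam : yP = y₂ + lam*(xP - x₂) := by linear_combination hlam
    -- coordinates of Q
    have hadd := Point.add_of_X_ne (h₁ := hns2) (h₂ := hP) hx21
    have hQeq : Point.some _ _ hQ = Point.some _ _
        (WeierstrassCurve.Affine.nonsingular_add hns2 hP (fun h => (hx21 h.1).elim)) :=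
      h3Pq.symm.trans hadd
    injection hQeq with hxQ hyQe
    have hxQ' : xQ = lam^2 - x₂ - xP := by
      rw [hxQ]
      simp only [WeierstrassCurve.Affine.addX, shortWCurve, hlamdef]
      ring
    have hyQ' : yQ = lam*(x₂ - xQ) - y₂ := by
      rw [hyQe, hxQ]
      simp only [WeierstrassCurve.Affine.addY, WeierstrassCurve.Affine.negAddY,
        WeierstrassCurve.Affine.negY, WeierstrassCurve.Affine.addX, shortWCurve, hlamdef]
      ring
    -- x₂ ≠ γ (otherwise 2P = ±W, so 2Q = 6P = ±3W = 0, contradicting yQ ≠ 0)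
    have hQQ : Point.some _ _ hQ + Point.some _ _ hQ ≠ 0 := by
      have hyQne : yQ ≠ (shortWCurve a b).negY xQ yQ := by
        rw [hnegY]
        intro hcon
        exact hyQ0 ((mul_eq_zero.mp (show (2:k)*yQ = 0 by linear_combination hcon)).resolve_left h2)
      rw [Point.add_self_of_Y_ne hyQne]
      exact Point.some_ne_zero _
    have hx2γ : x₂ ≠ γ := by
      intro hxx
      have hxx0 : x₂ - γ = 0 := by rw [hxx]; ring
      have hyy : (y₂ - δ)*(y₂ + δ) = 0 := by
        linear_combination e2 - eW + (x₂^2 + x₂*γ + γ^2 + a) * hxx0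
      have h6a : Point.some _ _ hQ + Point.some _ _ hQ = (6:ℕ) • Point.some _ _ hP := by
        rw [show (6:ℕ) = 3*2 from rfl, mul_nsmul, two_nsmul, hPQ]
      have h6b : (6:ℕ) • Point.some _ _ hP = (3:ℕ) • Point.some _ _ hns2 := by
        rw [show (6:ℕ) = 2*3 from rfl, mul_nsmul, two_nsmul, h2P]
      rcases mul_eq_zero.mp hyy with h | h
      · have heqW : Point.some _ _ hns2 = Point.some _ _ hW :=
          stmt8_some_congr hxx (sub_eq_zero.mp h)
        apply hQQ
        rw [h6a, h6b, heqW, hord]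
      · have heqW : Point.some _ _ hns2 = -(Point.some _ _ hW) := by
          rw [Point.neg_some]
          refine stmt8_some_congr hxx ?_
          rw [hnegY]
          linear_combination h
        apply hQQ
        rw [h6a, h6b, heqW, stmt8_nsmul_neg, hord]
        simp
    -- h_W(P) ≠ 0
    have hhP : yP - δ - m*(xP - γ) ≠ 0 := by
      intro h0
      have key := stmt8_L1 a b γ δ m xP yP eP eW g3 g4
      rw [h0, zero_mul] at key
      have hx3 : (xP - γ)^3 = 0 := by linear_combination key
      have hxγ : xP - γ = 0 := pow_eq_zero_iff (by norm_num) |>.mp hx3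
      have hyδ : yP = δ := by linear_combination h0 + m*hxγ
      have hPW : Point.some _ _ hP = Point.some _ _ hW :=
        stmt8_some_congr (by linear_combination hxγ) hyδ
      rw [hPW, hord] at hPQ
      exact Point.some_ne_zero hQ hPQ.symm
    -- h_W(2P) ≠ 0
    have hh2 : y₂ - δ - m*(x₂ - γ) ≠ 0 := by
      intro h0
      have key := stmt8_L1 a b γ δ m x₂ y₂ e2 eW g3 g4
      rw [h0, zero_mul] at key
      have hx3 : (x₂ - γ)^3 = 0 := by linear_combination key
      have hxγ : x₂ - γ = 0 := pow_eq_zero_iff (by norm_num) |>.mp hx3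
      exact hx2γ (by linear_combination hxγ)
    have hγx2 : γ - x₂ ≠ 0 := sub_ne_zero.mpr (Ne.symm hx2γ)
    -- the three product identities
    have E1 : (yP - δ - m*(xP - γ))^2 * (-y₂ - δ - m*(x₂ - γ))
        = (yP - δ + l*(γ - xP))^3 := by
      have := stmt8_A1 h2 h3 a b γ δ m xP yP l eP eW g3 g4 hl hyP
      rw [hx2def, hy2def, hx2def]
      linear_combination this
    have E2 : (y₂ - δ - m*(x₂ - γ)) * (-y₂ - δ - m*(x₂ - γ)) = -(x₂ - γ)^3 :=
      stmt8_L1 a b γ δ m x₂ y₂ e2 eW g3 g4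
    have E3 : (y₂ - δ - m*(x₂ - γ)) * (yP - δ - m*(xP - γ)) *
        (-yQ - δ - m*(xQ - γ)) = (y₂ - δ + lam*(γ - x₂))^3 := by
      have := stmt8_A2 h3 a b γ δ m x₂ y₂ xP yP lam e2 eP eW g3 g4 hy2lam (Ne.symm hx21)
      rw [hyQ', hxQ']
      linear_combination this
    -- assemble the cube root
    refine ⟨(yP - δ + l*(γ - xP)) * (y₂ - δ + lam*(γ - x₂)) /
      ((γ - x₂) * (yP - δ - m*(xP - γ))), ?_⟩
    rw [div_pow, div_eq_iff (pow_ne_zero 3 (mul_ne_zero hγx2 hhP))]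
    linear_combination (-((yP - δ + l*(γ - xP))^3)) * E3
      - ((y₂ - δ - m*(x₂ - γ)) * (yP - δ - m*(xP - γ)) * (-yQ - δ - m*(xQ - γ))) * E1
      + ((-yQ - δ - m*(xQ - γ)) * (yP - δ - m*(xP - γ))^3) * E2
end

section
/- Suppose the full 2-torsion of E is k-rational, i.e. x³ + a·x + b = (x − γ₁)(x − γ₂)(x − γ₃) with γ₁, γ₂, γ₃ ∈ k, and let Q = (x_Q, y_Q) ∈ E(k) be an affine point with y_Q ≠ 0. Then the set {P ∈ E(k) : 2•P = Q} and the set {(ω₁, ω₂) ∈ k × k : ω₁² = x_Q − γ₁ and ω₂² = x_Q − γ₂} are finite and have the same number of elements. -/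
open Polynomial

namespace Stmt10Aux

open WeierstrassCurve.Affine

variable {k : Type*} [Field k]

open Classical

lemma negY_short (a b x y : k) : (shortWCurve a b).negY x y = -y := by
  simp [WeierstrassCurve.Affine.negY, shortWCurve]

lemma ne_negY {a b : k} (h2 : (2:k) ≠ 0) {x y : k} (hy : y ≠ 0) :
    y ≠ (shortWCurve a b).negY x y := by
  rw [negY_short]
  intro h
  apply hy
  have h' : 2 * y = 0 := by linear_combination h
  rcases mul_eq_zero.mp h' with h'' | h''
  · exact absurd h'' h2
  · exact h''

lemma delta_short (a b : k) : (shortWCurve a b).Δ = -16 * (4 * a ^ 3 + 27 * b ^ 2) := by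
  simp [shortWCurve, WeierstrassCurve.Δ, WeierstrassCurve.b₂, WeierstrassCurve.b₄,
    WeierstrassCurve.b₆, WeierstrassCurve.b₈]
  ring

lemma equation_short (a b x y : k) :
    (shortWCurve a b).Equation x y ↔ y ^ 2 = x ^ 3 + a * x + b := by
  rw [equation_iff]; simp [shortWCurve]

lemma some_eq_some {a b : k} {x y x' y' : k} {h : (shortWCurve a b).Nonsingular x y}
    {h' : (shortWCurve a b).Nonsingular x' y'} (hx : x = x') (hy : y = y') :
    Point.some x y h = Point.some x' y' h' := by subst hx; subst hy; rfl

lemma double_some {a b : k} (h2 : (2:k) ≠ 0) {x y xq yq : k}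
    (h : (shortWCurve a b).Nonsingular x y) (hQ : (shortWCurve a b).Nonsingular xq yq)
    (hy : y ≠ 0)
    (hx : (3*x^2+a)^2 = (xq + 2*x)*(2*y)^2)
    (hyy : (3*x^2+a)*(x - xq) = (yq + y)*(2*y)) :
    2 • Point.some x y h = Point.some xq yq hQ := by
  have h2y : (2*y) ≠ 0 := mul_ne_zero h2 hy
  have hdx : ((3*x^2+a)/(2*y))^2 - 2*x = xq := by
    have e : ((3*x^2+a)/(2*y))^2 = xq + 2*x := by
      rw [div_pow, div_eq_iff (pow_ne_zero 2 h2y), hx]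
    rw [e]; ring
  have hdy : ((3*x^2+a)/(2*y))*(x - xq) - y = yq := by
    have e : (3*x^2+a)/(2*y)*(x-xq) = yq + y := by
      rw [div_mul_eq_mul_div, div_eq_iff h2y, hyy]
    rw [e]; ring
  rw [two_nsmul, Point.add_self_of_Y_ne (ne_negY h2 hy)]
  have hslope : (shortWCurve a b).slope x x y y = (3*x^2+a)/(2*y) := by
    rw [slope_of_Y_ne rfl (ne_negY h2 hy), negY_short]
    simp [shortWCurve]
    ring_nf
  have hX : (shortWCurve a b).addX x x ((shortWCurve a b).slope x x y y) = xq := by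
    rw [hslope, addX]; simp [shortWCurve]; linear_combination hdx
  have hY : (shortWCurve a b).addY x x y ((shortWCurve a b).slope x x y y) = yq := by
    rw [addY, negAddY, hX, negY_short, hslope]; linear_combination hdy
  exact some_eq_some hX hY

lemma of_double_some {a b : k} (h2 : (2:k) ≠ 0) {x y xq yq : k}
    (h : (shortWCurve a b).Nonsingular x y) (hQ : (shortWCurve a b).Nonsingular xq yq)
    (heq : 2 • Point.some x y h = Point.some xq yq hQ) :
    y ≠ 0 ∧ (3*x^2+a)^2 = (xq + 2*x)*(2*y)^2 ∧ (3*x^2+a)*(x - xq) = (yq + y)*(2*y) := by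
  by_cases hy : y = (shortWCurve a b).negY x y
  · rw [two_nsmul, Point.add_self_of_Y_eq hy] at heq
    exact absurd heq.symm (Point.some_ne_zero hQ)
  have hy0 : y ≠ 0 := by
    intro h0; apply hy; rw [negY_short, h0, neg_zero]
  have h2y : (2*y) ≠ 0 := mul_ne_zero h2 hy0
  rw [two_nsmul, Point.add_self_of_Y_ne hy] at heq
  injection heq with hX hY
  have hslope : (shortWCurve a b).slope x x y y = (3*x^2+a)/(2*y) := by
    rw [slope_of_Y_ne rfl hy, negY_short]
    simp [shortWCurve]
    ring_nf
  have hdx : ((3*x^2+a)/(2*y))^2 - 2*x = xq := by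
    rw [← hX, hslope, addX]; simp [shortWCurve]; ring
  have hdy : ((3*x^2+a)/(2*y))*(x - xq) - y = yq := by
    rw [← hY, ← hX, addY, negAddY, negY_short, hslope]; ring
  refine ⟨hy0, ?_, ?_⟩
  · have e : ((3*x^2+a)/(2*y))^2 * (2*y)^2 = (3*x^2+a)^2 := by
      rw [← mul_pow, div_mul_cancel₀ _ h2y]
    linear_combination (2*y)^2 * hdx - e
  · have e : ((3*x^2+a)/(2*y))*(2*y) = (3*x^2+a) := div_mul_cancel₀ _ h2y
    linear_combination (2*y) * hdy - (x - xq) * e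

lemma core (γ₁ γ₂ γ₃ a b xQ yQ w1 w2 w3 : k)
    (hs1 : γ₁ + γ₂ + γ₃ = 0) (hA : γ₁*γ₂ + γ₁*γ₃ + γ₂*γ₃ = a) (hB : γ₁*γ₂*γ₃ = -b)
    (hq : yQ^2 = xQ^3 + a*xQ + b)
    (hw1 : w1^2 = xQ - γ₁) (hw2 : w2^2 = xQ - γ₂) (hw3 : w3^2 = xQ - γ₃)
    (hw4 : w1*w2*w3 = yQ) :
    ((w1+w2)*(w2+w3)*(w3+w1))^2
        = (xQ + w1*w2 + w2*w3 + w3*w1)^3 + a*(xQ + w1*w2 + w2*w3 + w3*w1) + b ∧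
    (3*(xQ + w1*w2 + w2*w3 + w3*w1)^2+a)^2
        = (xQ + 2*(xQ + w1*w2 + w2*w3 + w3*w1))*(2*((w1+w2)*(w2+w3)*(w3+w1)))^2 ∧
    (3*(xQ + w1*w2 + w2*w3 + w3*w1)^2+a)*((xQ + w1*w2 + w2*w3 + w3*w1) - xQ)
        = (yQ + (w1+w2)*(w2+w3)*(w3+w1))*(2*((w1+w2)*(w2+w3)*(w3+w1))) ∧
    (xQ + w1*w2 + w2*w3 + w3*w1)^2 - 2*γ₁*(xQ + w1*w2 + w2*w3 + w3*w1) - γ₁^2 - γ₂*γ₃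
        = w1*(2*((w1+w2)*(w2+w3)*(w3+w1))) ∧
    (xQ + w1*w2 + w2*w3 + w3*w1)^2 - 2*γ₂*(xQ + w1*w2 + w2*w3 + w3*w1) - γ₂^2 - γ₁*γ₃
        = w2*(2*((w1+w2)*(w2+w3)*(w3+w1))) := by
  refine ⟨?_, ?_, ?_, ?_, ?_⟩
  · linear_combination ((-1 : k)) * hB + (w2*w3 + w1*w3 + w1*w2 + xQ) * hA + ((-2 : k)*w1*w2*w3^2 + (-2 : k)*xQ*w3^2 + (-4 : k)*xQ*w2*w3 + (-4 : k)*xQ*w1*w3 + (-2 : k)*xQ*w1*w2 + (-2 : k)*xQ^2 + γ₂*w3^2 + (2 : k)*γ₂*w1*w3 + γ₂*xQ + γ₁*w3^2 + (2 : k)*γ₁*w2*w3 + γ₁*xQ + (-1 : k)*γ₁*γ₂) * hs1 + (w3^4 + (3 : k)*w2*w3^3 + (4 : k)*w2^2*w3^2 + (3 : k)*w2^3*w3 + w2^4 + w1*w3^3 + (3 : k)*w1*w2*w3^2 + (3 : k)*w1*w2^2*w3 + w1*w2^3 + w1^2*w3^2 + (2 : k)*w1^2*w2*w3 + w1^2*w2^2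 + (-2 : k)*xQ*w3^2 + (-4 : k)*xQ*w2*w3 + (-2 : k)*xQ*w2^2 + (-1 : k)*γ₁*w3^2 + (-2 : k)*γ₁*w2*w3 + (-1 : k)*γ₁*w2^2) * hw1 + (w3^4 + w2*w3^3 + w2^2*w3^2 + (3 : k)*w1*w3^3 + (3 : k)*w1*w2*w3^2 + (2 : k)*w1*w2^2*w3 + (2 : k)*xQ*w3^2 + (3 : k)*xQ*w2*w3 + xQ*w2^2 + (-1 : k)*xQ*w1*w3 + xQ*w1*w2 + (-1 : k)*xQ^2 + (-1 : k)*γ₂*w3^2 + (-2 : k)*γ₂*w1*w3 + (-1 : k)*γ₂*xQ + (-4 : k)*γ₁*w3^2 + (-3 : k)*γ₁*w2*w3 + (-1 : k)*γ₁*w2^2 + (-3 : k)*γ₁*w1*w3 + (-1 : k)*γ₁*w1*w2 + γ₁*γ₂ + γ₁^2) * hw2 + ((2 : k)*w1*w2*w3^2 + (2 : k)*xQ*w3^2 + (4 : k)*xQ*w2*w3 + (4 : k)*xQ*w1*w3 + (2 : k)*xQ*w1*w2 + (2 : k)*xQ^2 + (-1 : k)*γ₂*w3^2 + (-1 : k)*γ₂*w2*w3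 + (-3 : k)*γ₂*w1*w3 + (-1 : k)*γ₂*w1*w2 + (-2 : k)*γ₂*xQ + (-1 : k)*γ₁*w3^2 + (-3 : k)*γ₁*w2*w3 + (-1 : k)*γ₁*w1*w3 + (-1 : k)*γ₁*w1*w2 + (-2 : k)*γ₁*xQ + (2 : k)*γ₁*γ₂) * hw3
  · linear_combination ((-6 : k)*w2^2*w3^2 + (-12 : k)*w1*w2*w3^2 + (-12 : k)*w1*w2^2*w3 + (-6 : k)*w1^2*w3^2 + (-12 : k)*w1^2*w2*w3 + (-6 : k)*w1^2*w2^2 + (-12 : k)*xQ*w2*w3 + (-12 : k)*xQ*w1*w3 + (-12 : k)*xQ*w1*w2 + (-6 : k)*xQ^2 + (-1 : k)*a + (-1 : k)*γ₂*γ₃ + (-1 : k)*γ₁*γ₃ + (-1 : k)*γ₁*γ₂) * hA + ((32 : k)*xQ*w2*w3^3 + (32 : k)*xQ*w1*w3^3 + (96 : k)*xQ*w1*w2*w3^2 + (96 : k)*xQ^2*w3^2 + (96 : k)*xQ^2*w2*w3 + (96 : k)*xQ^2*w1*w3 + (32 : k)*xQ^2*w1*w2 + (32 : k)*xQ^3 +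 (-8 : k)*γ₂*w2*w3^3 + (6 : k)*γ₂*w2^2*w3^2 + (-24 : k)*γ₂*w1*w3^3 + (-24 : k)*γ₂*w1*w2*w3^2 + (12 : k)*γ₂*w1*w2^2*w3 + (6 : k)*γ₂*w1^2*w3^2 + (12 : k)*γ₂*w1^2*w2*w3 + (6 : k)*γ₂*w1^2*w2^2 + (-84 : k)*γ₂*xQ*w3^2 + (-36 : k)*γ₂*xQ*w2*w3 + (-84 : k)*γ₂*xQ*w1*w3 + (-8 : k)*γ₂*xQ*w1*w2 + (-30 : k)*γ₂*xQ^2 + (7 : k)*γ₂^2*w3^2 + (12 : k)*γ₂^2*w1*w3 + (5 : k)*γ₂^2*xQ + γ₂^2*γ₃ + (-24 : k)*γ₁*w2*w3^3 + (6 : k)*γ₁*w2^2*w3^2 + (-8 : k)*γ₁*w1*w3^3 + (-24 : k)*γ₁*w1*w2*w3^2 + (12 : k)*γ₁*w1*w2^2*w3 + (6 : k)*γ₁*w1^2*w3^2 + (12 : k)*γ₁*w1^2*w2*w3 + (6 : k)*γ₁*w1^2*w2^2 + (-84 : k)*γ₁*xQ*w3^2 + (-84 : k)*γ₁*xQ*w2*w3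 + (-36 : k)*γ₁*xQ*w1*w3 + (-8 : k)*γ₁*xQ*w1*w2 + (-30 : k)*γ₁*xQ^2 + (58 : k)*γ₁*γ₂*w3^2 + (36 : k)*γ₁*γ₂*w2*w3 + (36 : k)*γ₁*γ₂*w1*w3 + (8 : k)*γ₁*γ₂*w1*w2 + (38 : k)*γ₁*γ₂*xQ + (2 : k)*γ₁*γ₂*γ₃ + (-6 : k)*γ₁*γ₂^2 + (7 : k)*γ₁^2*w3^2 + (12 : k)*γ₁^2*w2*w3 + (5 : k)*γ₁^2*xQ + γ₁^2*γ₃ + (-6 : k)*γ₁^2*γ₂) * hs1 + ((-8 : k)*w2*w3^5 + (-7 : k)*w2^2*w3^4 + (-8 : k)*w2^3*w3^3 + (-24 : k)*w1*w3^5 + (-36 : k)*w1*w2*w3^4 + (-36 : k)*w1*w2^2*w3^3 + (-24 : k)*w1*w2^3*w3^2 + (-77 : k)*xQ*w3^4 + (-64 : k)*xQ*w2*w3^3 + (-70 : k)*xQ*w2^2*w3^2 + (-24 : k)*xQ*w2^3*w3 + (-68 : k)*xQ*w1*w3^3 + (-56 : k)*xQ*w1*w2*w3^2 + (-60 : k)*xQ*w1*w2^2*w3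 + (-8 : k)*xQ*w1*w2^3 + (22 : k)*xQ^2*w3^2 + (-24 : k)*xQ^2*w2*w3 + (-19 : k)*xQ^2*w2^2 + (60 : k)*xQ^2*w1*w3 + (-4 : k)*xQ^2*w1*w2 + (23 : k)*xQ^3 + (7 : k)*γ₂*w3^4 + (8 : k)*γ₂*w2*w3^3 + (36 : k)*γ₂*w1*w3^3 + (24 : k)*γ₂*w1*w2*w3^2 + (70 : k)*γ₂*xQ*w3^2 + (24 : k)*γ₂*xQ*w2*w3 + (60 : k)*γ₂*xQ*w1*w3 + (8 : k)*γ₂*xQ*w1*w2 + (19 : k)*γ₂*xQ^2 + (-6 : k)*γ₂^2*w3^2 + (-12 : k)*γ₂^2*w1*w3 + (-6 : k)*γ₂^2*xQ + (58 : k)*γ₁*w3^4 + (68 : k)*γ₁*w2*w3^3 + (58 : k)*γ₁*w2^2*w3^2 + (24 : k)*γ₁*w2^3*w3 + (68 : k)*γ₁*w1*w3^3 + (68 : k)*γ₁*w1*w2*w3^2 + (36 : k)*γ₁*w1*w2^2*w3 + (8 : k)*γ₁*w1*w2^3 + (78 : k)*γ₁*xQ*w3^2 + (60 : k)*γ₁*xQ*w2*w3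 + (26 : k)*γ₁*xQ*w2^2 + (48 : k)*γ₁*xQ*w1*w3 + (12 : k)*γ₁*xQ*w1*w2 + (-4 : k)*γ₁*xQ^2 + (-64 : k)*γ₁*γ₂*w3^2 + (-24 : k)*γ₁*γ₂*w2*w3 + (-48 : k)*γ₁*γ₂*w1*w3 + (-8 : k)*γ₁*γ₂*w1*w2 + (-32 : k)*γ₁*γ₂*xQ + (6 : k)*γ₁*γ₂^2 + (-64 : k)*γ₁^2*w3^2 + (-36 : k)*γ₁^2*w2*w3 + (-7 : k)*γ₁^2*w2^2 + (-36 : k)*γ₁^2*w1*w3 + (-8 : k)*γ₁^2*w1*w2 + (-25 : k)*γ₁^2*xQ + (13 : k)*γ₁^2*γ₂ + (6 : k)*γ₁^3) * hw2 + ((-24 : k)*w2*w3^5 + (-58 : k)*w2^2*w3^4 + (-68 : k)*w2^3*w3^3 + (-58 : k)*w2^4*w3^2 + (-24 : k)*w2^5*w3 + (-8 : k)*w1*w3^5 + (-36 : k)*w1*w2*w3^4 + (-68 : k)*w1*w2^2*w3^3 + (-68 : k)*w1*w2^3*w3^2 + (-36 : k)*w1*w2^4*w3 + (-8 : k)*w1*w2^5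 + (-7 : k)*w1^2*w3^4 + (-36 : k)*w1^2*w2*w3^3 + (-58 : k)*w1^2*w2^2*w3^2 + (-36 : k)*w1^2*w2^3*w3 + (-7 : k)*w1^2*w2^4 + (-8 : k)*w1^3*w3^3 + (-24 : k)*w1^3*w2*w3^2 + (-24 : k)*w1^3*w2^2*w3 + (-8 : k)*w1^3*w2^3 + (-19 : k)*xQ*w3^4 + (38 : k)*xQ*w2^2*w3^2 + (-19 : k)*xQ*w2^4 + (4 : k)*xQ*w1*w3^3 + (12 : k)*xQ*w1*w2*w3^2 + (12 : k)*xQ*w1*w2^2*w3 + (4 : k)*xQ*w1*w2^3 + (-12 : k)*xQ*w1^2*w3^2 + (-24 : k)*xQ*w1^2*w2*w3 + (-12 : k)*xQ*w1^2*w2^2 + (42 : k)*xQ^2*w3^2 + (84 : k)*xQ^2*w2*w3 + (42 : k)*xQ^2*w2^2 + (-6 : k)*γ₂^2*w3^2 + (-12 : k)*γ₂^2*w2*w3 + (-6 : k)*γ₂^2*w2^2 + (7 : k)*γ₁*w3^4 + (36 : k)*γ₁*w2*w3^3 + (58 : k)*γ₁*w2^2*w3^2 + (36 : k)*γ₁*w2^3*w3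 + (7 : k)*γ₁*w2^4 + (8 : k)*γ₁*w1*w3^3 + (24 : k)*γ₁*w1*w2*w3^2 + (24 : k)*γ₁*w1*w2^2*w3 + (8 : k)*γ₁*w1*w2^3 + (12 : k)*γ₁*xQ*w3^2 + (24 : k)*γ₁*xQ*w2*w3 + (12 : k)*γ₁*xQ*w2^2 + (-6 : k)*γ₁*γ₂*w3^2 + (-12 : k)*γ₁*γ₂*w2*w3 + (-6 : k)*γ₁*γ₂*w2^2 + (-6 : k)*γ₁^2*w3^2 + (-12 : k)*γ₁^2*w2*w3 + (-6 : k)*γ₁^2*w2^2) * hw1 + ((-32 : k)*xQ*w2*w3^3 + (-32 : k)*xQ*w1*w3^3 + (-96 : k)*xQ*w1*w2*w3^2 + (-96 : k)*xQ^2*w3^2 + (-96 : k)*xQ^2*w2*w3 + (-96 : k)*xQ^2*w1*w3 + (-32 : k)*xQ^2*w1*w2 + (-32 : k)*xQ^3 + (8 : k)*γ₂*w2*w3^3 + (24 : k)*γ₂*w1*w3^3 + (36 : k)*γ₂*w1*w2*w3^2 + (84 : k)*γ₂*xQ*w3^2 + (48 : k)*γ₂*xQ*w2*w3 + (96 : k)*γ₂*xQ*w1*w3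 + (20 : k)*γ₂*xQ*w1*w2 + (36 : k)*γ₂*xQ^2 + (-7 : k)*γ₂^2*w3^2 + (-12 : k)*γ₂^2*w1*w3 + (-5 : k)*γ₂^2*xQ + (-1 : k)*γ₂^3 + (24 : k)*γ₁*w2*w3^3 + (8 : k)*γ₁*w1*w3^3 + (36 : k)*γ₁*w1*w2*w3^2 + (84 : k)*γ₁*xQ*w3^2 + (96 : k)*γ₁*xQ*w2*w3 + (48 : k)*γ₁*xQ*w1*w3 + (20 : k)*γ₁*xQ*w1*w2 + (36 : k)*γ₁*xQ^2 + (-58 : k)*γ₁*γ₂*w3^2 + (-36 : k)*γ₁*γ₂*w2*w3 + (-36 : k)*γ₁*γ₂*w1*w3 + (-8 : k)*γ₁*γ₂*w1*w2 + (-38 : k)*γ₁*γ₂*xQ + (5 : k)*γ₁*γ₂^2 + (-7 : k)*γ₁^2*w3^2 + (-12 : k)*γ₁^2*w2*w3 + (-5 : k)*γ₁^2*xQ + (5 : k)*γ₁^2*γ₂ + (-1 : k)*γ₁^3) * hw3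
  · linear_combination ((-1 : k)*w2*w3 + (-1 : k)*w1*w3 + (-1 : k)*w1*w2) * hA + ((4 : k)*w1*w2*w3^2 + (4 : k)*xQ*w3^2 + (6 : k)*xQ*w2*w3 + (6 : k)*xQ*w1*w3 + (2 : k)*xQ*w1*w2 + (2 : k)*xQ^2 + (-2 : k)*γ₂*w3^2 + (-4 : k)*γ₂*w1*w3 + (-2 : k)*γ₂*xQ + (-2 : k)*γ₁*w3^2 + (-4 : k)*γ₁*w2*w3 + (-2 : k)*γ₁*xQ + (2 : k)*γ₁*γ₂) * hs1 + ((2 : k)*w2*w3^2 + (2 : k)*w2^2*w3 + (2 : k)*w1*w3^2 + (4 : k)*w1*w2*w3 + (2 : k)*w1*w2^2 + (2 : k)*w1^2*w3 + (2 : k)*w1^2*w2) * hw4 + ((-2 : k)*w3^4 + (-5 : k)*w2*w3^3 + (-6 : k)*w2^2*w3^2 + (-5 : k)*w2^3*w3 + (-2 : k)*w2^4 + (-1 : k)*w1*w3^3 + (-5 : k)*w1*w2*w3^2 + (-5 : k)*w1*w2^2*w3 + (-1 : k)*w1*w2^3 + (-2 : k)*w1^2*w3^2 + (-4 : k)*w1^2*w2*w3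 + (-2 : k)*w1^2*w2^2 + (4 : k)*xQ*w3^2 + (8 : k)*xQ*w2*w3 + (4 : k)*xQ*w2^2 + (2 : k)*γ₁*w3^2 + (4 : k)*γ₁*w2*w3 + (2 : k)*γ₁*w2^2) * hw1 + ((-2 : k)*w3^4 + (-1 : k)*w2*w3^3 + (-2 : k)*w2^2*w3^2 + (-5 : k)*w1*w3^3 + (-5 : k)*w1*w2*w3^2 + (-4 : k)*w1*w2^2*w3 + (-2 : k)*xQ*w3^2 + (-5 : k)*xQ*w2*w3 + (-2 : k)*xQ*w2^2 + (3 : k)*xQ*w1*w3 + (-1 : k)*xQ*w1*w2 + (2 : k)*xQ^2 + (2 : k)*γ₂*w3^2 + (4 : k)*γ₂*w1*w3 + (2 : k)*γ₂*xQ + (6 : k)*γ₁*w3^2 + (5 : k)*γ₁*w2*w3 + (2 : k)*γ₁*w2^2 + (5 : k)*γ₁*w1*w3 + γ₁*w1*w2 + (-2 : k)*γ₁*γ₂ + (-2 : k)*γ₁^2) * hw2 + ((-4 : k)*w1*w2*w3^2 + (-4 : k)*xQ*w3^2 + (-6 : k)*xQ*w2*w3 + (-6 : k)*xQ*w1*w3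 + (-2 : k)*xQ*w1*w2 + (-2 : k)*xQ^2 + (2 : k)*γ₂*w3^2 + γ₂*w2*w3 + (5 : k)*γ₂*w1*w3 + γ₂*w1*w2 + (2 : k)*γ₂*xQ + (2 : k)*γ₁*w3^2 + (5 : k)*γ₁*w2*w3 + γ₁*w1*w3 + γ₁*w1*w2 + (2 : k)*γ₁*xQ + (-2 : k)*γ₁*γ₂) * hw3
  · linear_combination ((-1 : k)*γ₁) * hs1 + ((-1 : k)*w3^2 + (-2 : k)*w2*w3 + (-1 : k)*w2^2 + (-2 : k)*w1*w3 + (-2 : k)*w1*w2) * hw1 + (w3^2 + (-1 : k)*xQ + γ₁) * hw2 + ((-1 : k)*γ₂ + γ₁) * hw3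
  · linear_combination ((-1 : k)*γ₂) * hs1 + ((-1 : k)*w3^2 + (-2 : k)*w2*w3 + (-2 : k)*w1*w3 + (-2 : k)*w1*w2 + (-1 : k)*xQ + γ₁) * hw2 + (w3^2 + (-1 : k)*w2^2) * hw1 + (γ₂ + (-1 : k)*γ₁) * hw3

lemma yp_ne (γ₁ γ₂ γ₃ xQ : k) (w1 w2 w3 : k)
    (hn12 : γ₁ ≠ γ₂) (hn13 : γ₁ ≠ γ₃) (hn23 : γ₂ ≠ γ₃)
    (hw1 : w1^2 = xQ - γ₁) (hw2 : w2^2 = xQ - γ₂) (hw3 : w3^2 = xQ - γ₃) :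
    (w1+w2)*(w2+w3)*(w3+w1) ≠ 0 := by
  apply mul_ne_zero (mul_ne_zero ?_ ?_) ?_
  · intro h0; exact hn12 (by linear_combination hw1 - hw2 + (w2 - w1) * h0)
  · intro h0; exact hn23 (by linear_combination hw2 - hw3 + (w3 - w2) * h0)
  · intro h0; exact hn13 (by linear_combination hw1 - hw3 + (w3 - w1) * h0)

lemma backward (h2 : (2:k) ≠ 0) (γ₁ γ₂ γ₃ a b xQ yQ x y : k)
    (hs1 : γ₁ + γ₂ + γ₃ = 0) (hA : γ₁*γ₂ + γ₁*γ₃ + γ₂*γ₃ = a) (hB : γ₁*γ₂*γ₃ = -b)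
    (hx1 : xQ - γ₁ ≠ 0) (hx2 : xQ - γ₂ ≠ 0)
    (hy : y ≠ 0) (hcurve : y^2 = x^3 + a*x + b)
    (hxE : (3*x^2+a)^2 = (xQ + 2*x)*(2*y)^2)
    (hyy : (3*x^2+a)*(x - xQ) = (yQ + y)*(2*y)) :
    ∃ w1 w2 : k, w1^2 = xQ - γ₁ ∧ w2^2 = xQ - γ₂ ∧
      xQ + w1*w2 + w2*(yQ/(w1*w2)) + (yQ/(w1*w2))*w1 = x ∧
      (w1+w2)*(w2+(yQ/(w1*w2)))*((yQ/(w1*w2))+w1) = y := by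
  have h2y : (2*y) ≠ 0 := mul_ne_zero h2 hy
  set v1 : k := (x^2 - 2*γ₁*x - γ₁^2 - γ₂*γ₃)/(2*y) with hv1def
  set v2 : k := (x^2 - 2*γ₂*x - γ₂^2 - γ₁*γ₃)/(2*y) with hv2def
  have hv1 : v1^2 = xQ - γ₁ := by
    rw [hv1def, div_pow, div_eq_iff (pow_ne_zero 2 h2y)]
    linear_combination ((2 : k)*γ₁*x^2 + (-2 : k)*γ₁*γ₂*γ₃ + (4 : k)*γ₁^2*x + (-1 : k)*γ₁^2*γ₃ + (-1 : k)*γ₁^2*γ₂ + γ₁^3) * hs1 + ((1 : k)) * hxE + ((-2 : k)*x^2 + a + γ₂*γ₃ + (-4 : k)*γ₁*x + γ₁*γ₃ + γ₁*γ₂) * hA + ((8 : k)*x + (4 : k)*γ₁) * hcurve + ((8 : k)*x + (4 : k)*γ₁) * hB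
  have hv2 : v2^2 = xQ - γ₂ := by
    rw [hv2def, div_pow, div_eq_iff (pow_ne_zero 2 h2y)]
    linear_combination ((2 : k)*γ₂*x^2 + (4 : k)*γ₂^2*x + (-1 : k)*γ₂^2*γ₃ + γ₂^3 + (-2 : k)*γ₁*γ₂*γ₃ + (-1 : k)*γ₁*γ₂^2) * hs1 + ((1 : k)) * hxE + ((-2 : k)*x^2 + a + (-4 : k)*γ₂*x + γ₂*γ₃ + γ₁*γ₃ + γ₁*γ₂) * hA + ((8 : k)*x + (4 : k)*γ₂) * hcurve + ((8 : k)*x + (4 : k)*γ₂) * hB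
  have hv1ne : v1 ≠ 0 := by
    intro h0; exact hx1 (by rw [← hv1, h0]; ring)
  have hv2ne : v2 ≠ 0 := by
    intro h0; exact hx2 (by rw [← hv2, h0]; ring)
  have hv12ne : v1 * v2 ≠ 0 := mul_ne_zero hv1ne hv2ne
  have hS8 : (x^2 - 2*γ₁*x - γ₁^2 - γ₂*γ₃) * (x^2 - 2*γ₂*x - γ₂^2 - γ₁*γ₃)
      * (x^2 - 2*γ₃*x - γ₃^2 - γ₁*γ₂) = yQ*(2*y)^3 := by
    linear_combination ((-2 : k)*x^5 + (-1 : k)*γ₃*x^4 + (4 : k)*γ₂*y^2*xQ + (4 : k)*γ₂*x*y^2 + (-6 : k)*γ₂*x^4 + (4 : k)*γ₂*γ₃*x^3 + γ₂*γ₃^2*x^2 + (-1 : k)*γ₂^2*γ₃*x^2 + (-2 : k)*γ₂^2*γ₃^2*x + (-1 : k)*γ₂^3*γ₃^2 + (4 : k)*γ₁*y^2*xQ + (4 : k)*γ₁*x*y^2 + (-6 : k)*γ₁*x^4 + (4 : k)*γ₁*γ₃*x^3 + γ₁*γ₃^2*x^2 + (-8 : k)*γ₁*γ₂*y^2 + (12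 : k)*γ₁*γ₂*x^3 + γ₁*γ₂*γ₃*x^2 + (-2 : k)*γ₁*γ₂*γ₃^2*x + (-1 : k)*γ₁*γ₂*γ₃^3 + (-1 : k)*γ₁*γ₂^2*x^2 + (2 : k)*γ₁*γ₂^2*γ₃*x + γ₁*γ₂^2*γ₃^2 + (-3 : k)*γ₁*γ₂^3*γ₃ + (-1 : k)*γ₁^2*γ₃*x^2 + (-2 : k)*γ₁^2*γ₃^2*x + (-1 : k)*γ₁^2*γ₂*x^2 + (2 : k)*γ₁^2*γ₂*γ₃*x + γ₁^2*γ₂*γ₃^2 + (6 : k)*γ₁^2*γ₂^2*x + (-8 : k)*γ₁^2*γ₂^2*γ₃ + (-1 : k)*γ₁^2*γ₂^3 + (-1 : k)*γ₁^3*γ₃^2 + (-3 : k)*γ₁^3*γ₂*γ₃ + (-1 : k)*γ₁^3*γ₂^2) * hs1 + ((4 : k)*y^2) * hyy + ((-4 : k)*y^2*xQ + (-4 : k)*x*y^2 + (10 : k)*x^4 + (-3 : k)*a*x^2 + (-3 : k)*γ₂*γ₃*x^2 + (2 : k)*γ₂^2*x^2 + γ₂^2*a + γ₂^3*γ₃ +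 (-3 : k)*γ₁*γ₃*x^2 + (-1 : k)*γ₁*γ₂*x^2 + γ₁*γ₂*a + (-8 : k)*γ₁*γ₂^2*x + (2 : k)*γ₁*γ₂^2*γ₃ + γ₁*γ₂^3 + (2 : k)*γ₁^2*x^2 + γ₁^2*a + (-8 : k)*γ₁^2*γ₂*x + (2 : k)*γ₁^2*γ₂*γ₃ + γ₁^2*γ₂^2 + γ₁^3*γ₃ + γ₁^3*γ₂) * hA + ((-3 : k)*x^2 + γ₂^2 + γ₁*γ₂ + γ₁^2) * hxE + ((8 : k)*y^2 + (-28 : k)*x^3 + (4 : k)*γ₂^2*x + (4 : k)*γ₁*γ₂*x + (8 : k)*γ₁*γ₂^2 + (4 : k)*γ₁^2*x + (8 : k)*γ₁^2*γ₂) * hcurve + ((8 : k)*y^2 + (-28 : k)*x^3 + (4 : k)*γ₂^2*x + (4 : k)*γ₁*γ₂*x + (8 : k)*γ₁*γ₂^2 + (4 : k)*γ₁^2*x + (8 : k)*γ₁^2*γ₂) * hB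
  have hv3 : yQ/(v1*v2) = (x^2 - 2*γ₃*x - γ₃^2 - γ₁*γ₂)/(2*y) := by
    rw [div_eq_div_iff hv12ne h2y, hv1def, hv2def, div_mul_div_comm, ← mul_div_assoc,
      eq_div_iff (mul_ne_zero h2y h2y)]
    linear_combination -hS8
  refine ⟨v1, v2, hv1, hv2, ?_, ?_⟩
  · rw [hv3, hv1def, hv2def]
    field_simp
    linear_combination ((-4 : k)*x^3 + (-2 : k)*γ₃*x^2 + (-2 : k)*γ₂*x^2 + (4 : k)*γ₂*γ₃*x + γ₂*γ₃^2 + γ₂^2*γ₃ + (-2 : k)*γ₁*x^2 + (4 : k)*γ₁*γ₃*x + γ₁*γ₃^2 + (4 : k)*γ₁*γ₂*x + γ₁*γ₂*γ₃ + γ₁*γ₂^2 + γ₁^2*γ₃ + γ₁^2*γ₂) * hs1 + ((-1 : k)) * hxE + ((6 : k)*x^2 + (-1 : k)*a + (-1 : k)*γ₂*γ₃ + (-1 : k)*γ₁*γ₃ + (-1 : k)*γ₁*γ₂) * hA + ((-12 : k)*x) * hcurve + ((-12 : k)*x) * hB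
  · rw [hv3, hv1def, hv2def]
    field_simp
    linear_combination ((-16 : k)*x^5 + (8 : k)*γ₃^2*x^3 + (2 : k)*γ₃^3*x^2 + (-8 : k)*γ₂*x*y^2 + (8 : k)*γ₂*x^4 + (8 : k)*γ₂*γ₃*x^3 + (-8 : k)*γ₂*γ₃^2*x^2 + (-6 : k)*γ₂*γ₃^3*x + (-1 : k)*γ₂*γ₃^4 + (8 : k)*γ₂^2*x^3 + (-4 : k)*γ₂^2*γ₃^2*x + (-1 : k)*γ₂^2*γ₃^3 + (2 : k)*γ₂^3*x^2 + (-6 : k)*γ₂^3*γ₃*x + (-1 : k)*γ₂^3*γ₃^2 + (-1 : k)*γ₂^4*γ₃ + (-8 : k)*γ₁*x*y^2 + (8 : k)*γ₁*x^4 + (8 : k)*γ₁*γ₃*x^3 + (-8 : k)*γ₁*γ₃^2*x^2 + (-6 : k)*γ₁*γ₃^3*x + (-1 : k)*γ₁*γ₃^4 + (8 : k)*γ₁*γ₂*y^2 + (2 : k)*γ₁*γ₂*γ₃*x^2 + (-16 : k)*γ₁*γ₂^2*γ₃*x + (-4 : k)*γ₁*γ₂^2*γ₃^2 + (-6 : k)*γ₁*γ₂^3*x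 + (-1 : k)*γ₁*γ₂^4 + (8 : k)*γ₁^2*x^3 + (-4 : k)*γ₁^2*γ₃^2*x + (-1 : k)*γ₁^2*γ₃^3 + (-16 : k)*γ₁^2*γ₂*γ₃*x + (-4 : k)*γ₁^2*γ₂*γ₃^2 + (-12 : k)*γ₁^2*γ₂^2*x + (4 : k)*γ₁^2*γ₂^2*γ₃ + (-1 : k)*γ₁^2*γ₂^3 + (2 : k)*γ₁^3*x^2 + (-6 : k)*γ₁^3*γ₃*x + (-1 : k)*γ₁^3*γ₃^2 + (-6 : k)*γ₁^3*γ₂*x + (-1 : k)*γ₁^3*γ₂^2 + (-1 : k)*γ₁^4*γ₃ + (-1 : k)*γ₁^4*γ₂) * hs1 + ((-8 : k)*y^2 + (-8 : k)*x^3 + (8 : k)*γ₂^2*x + (8 : k)*γ₁*γ₂*x + (-8 : k)*γ₁*γ₂^2 + (8 : k)*γ₁^2*x + (-8 : k)*γ₁^2*γ₂) * hcurve + ((-8 : k)*y^2 + (-8 : k)*x^3 + (8 : k)*γ₂^2*x + (8 : k)*γ₁*γ₂*x + (-8 : k)*γ₁*γ₂^2 + (8 : k)*γ₁^2*x + (-8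 : k)*γ₁^2*γ₂) * hB + ((8 : k)*x*y^2 + (8 : k)*x^4 + (-8 : k)*γ₂^2*x^2 + (-8 : k)*γ₁*γ₂*x^2 + (8 : k)*γ₁*γ₂^2*x + (-8 : k)*γ₁^2*x^2 + (8 : k)*γ₁^2*γ₂*x) * hA

end Stmt10Aux

open Classical Stmt10Aux WeierstrassCurve.Affine in
theorem stmt_10 {k : Type*} [Field k] (h2 : (2 : k) ≠ 0) (h3 : (3 : k) ≠ 0)
    (a b : k) (hΔ : -16 * (4 * a ^ 3 + 27 * b ^ 2) ≠ 0)
    (γ₁ γ₂ γ₃ : k)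
    (hfact : (X ^ 3 + C a * X + C b : k[X])
        = (X - C γ₁) * (X - C γ₂) * (X - C γ₃))
    (xQ yQ : k) (hQ : (shortWCurve a b).Nonsingular xQ yQ) (hyQ : yQ ≠ 0) :
    ({P : (shortWCurve a b).Point |
        2 • P = WeierstrassCurve.Affine.Point.some xQ yQ hQ}).Finite ∧
    ({ω : k × k | ω.1 ^ 2 = xQ - γ₁ ∧ ω.2 ^ 2 = xQ - γ₂}).Finite ∧
    Nat.card {P : (shortWCurve a b).Point |
        2 • P = WeierstrassCurve.Affine.Point.some xQ yQ hQ} =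
      Nat.card {ω : k × k | ω.1 ^ 2 = xQ - γ₁ ∧ ω.2 ^ 2 = xQ - γ₂} := by
  -- symmetric function relations
  obtain ⟨hs1, hA, hB⟩ : γ₁ + γ₂ + γ₃ = 0 ∧ γ₁*γ₂ + γ₁*γ₃ + γ₂*γ₃ = a ∧ γ₁*γ₂*γ₃ = -b := by
    have hexp : (X - C γ₁) * (X - C γ₂) * (X - C γ₃)
        = X^3 - C (γ₁+γ₂+γ₃) * X^2 + C (γ₁*γ₂+γ₁*γ₃+γ₂*γ₃) * X - C (γ₁*γ₂*γ₃) := by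
      simp only [C_add, C_mul, C_neg]; ring
    rw [hexp] at hfact
    have hc2 := congrArg (fun p => coeff p 2) hfact
    have hc1 := congrArg (fun p => coeff p 1) hfact
    have hc0 := congrArg (fun p => coeff p 0) hfact
    simp only [coeff_add, coeff_sub, coeff_C_mul, coeff_X_pow, coeff_C, coeff_X,
      mul_one, mul_zero] at hc2 hc1 hc0
    norm_num at hc2 hc1 hc0
    exact ⟨by linear_combination hc2, by linear_combination -hc1, by linear_combination hc0⟩
  have hΔ' : (shortWCurve a b).Δ ≠ 0 := by rw [delta_short]; exact hΔ
  have hq : yQ^2 = xQ^3 + a*xQ + b := by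
    have h := (equation_short a b xQ yQ).mp hQ.1
    linear_combination h
  have hn12 : γ₁ ≠ γ₂ := fun h12 => hΔ (by linear_combination ((-432 : k)*b + (432 : k)*γ₁*γ₂*γ₃) * hB + ((64 : k)*a^2 + (64 : k)*γ₂*γ₃*a + (64 : k)*γ₂^2*γ₃^2 + (64 : k)*γ₁*γ₃*a + (64 : k)*γ₁*γ₂*a + (128 : k)*γ₁*γ₂*γ₃^2 + (128 : k)*γ₁*γ₂^2*γ₃ + (64 : k)*γ₁^2*γ₃^2 + (128 : k)*γ₁^2*γ₂*γ₃ + (64 : k)*γ₁^2*γ₂^2) * hA + ((-64 : k)*γ₂^3*γ₃^2 + (64 : k)*γ₂^4*γ₃ + (-64 : k)*γ₂^5 + (-192 : k)*γ₁*γ₂^2*γ₃^2 + (64 : k)*γ₁*γ₂^3*γ₃ + (-128 : k)*γ₁*γ₂^4 + (-192 : k)*γ₁^2*γ₂*γ₃^2 + (-432 : k)*γ₁^2*γ₂^2*γ₃ + (176 : k)*γ₁^2*γ₂^3 + (-64 : k)*γ₁^3*γ₃^2 + (64 : k)*γ₁^3*γ₂*γ₃ + (176 : k)*γ₁^3*γ₂^2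 + (64 : k)*γ₁^4*γ₃ + (-128 : k)*γ₁^4*γ₂ + (-64 : k)*γ₁^5) * hs1 + ((-64 : k)*γ₂^5 + (-256 : k)*γ₁*γ₂^4 + (-208 : k)*γ₁^2*γ₂^3 + (208 : k)*γ₁^3*γ₂^2 + (256 : k)*γ₁^4*γ₂ + (64 : k)*γ₁^5) * h12)
  have hn13 : γ₁ ≠ γ₃ := fun h13 => hΔ (by linear_combination ((-432 : k)*b + (432 : k)*γ₁*γ₂*γ₃) * hB + ((64 : k)*a^2 + (64 : k)*γ₂*γ₃*a + (64 : k)*γ₂^2*γ₃^2 + (64 : k)*γ₁*γ₃*a + (64 : k)*γ₁*γ₂*a + (128 : k)*γ₁*γ₂*γ₃^2 + (128 : k)*γ₁*γ₂^2*γ₃ + (64 : k)*γ₁^2*γ₃^2 + (128 : k)*γ₁^2*γ₂*γ₃ + (64 : k)*γ₁^2*γ₂^2) * hA + ((-64 : k)*γ₂^3*γ₃^2 + (64 : k)*γ₂^4*γ₃ + (-192 : k)*γ₁*γ₂^2*γ₃^2 + (64 : k)*γ₁*γ₂^3*γ₃ + (-64 : k)*γ₁*γ₂^4 + (-192 : k)*γ₁^2*γ₂*γ₃^2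 + (-432 : k)*γ₁^2*γ₂^2*γ₃ + (-64 : k)*γ₁^3*γ₃^2 + (64 : k)*γ₁^3*γ₂*γ₃ + (112 : k)*γ₁^3*γ₂^2 + (64 : k)*γ₁^4*γ₃ + (-48 : k)*γ₁^4*γ₂ + (-32 : k)*γ₁^5) * hs1 + ((64 : k)*γ₂^5 + (64 : k)*γ₁*γ₂^4 + (-176 : k)*γ₁^2*γ₂^3 + (-64 : k)*γ₁^3*γ₂^2 + (80 : k)*γ₁^4*γ₂ + (32 : k)*γ₁^5) * h13)
  have hn23 : γ₂ ≠ γ₃ := fun h23 => hΔ (by linear_combination ((-432 : k)*b + (432 : k)*γ₁*γ₂*γ₃) * hB + ((64 : k)*a^2 + (64 : k)*γ₂*γ₃*a + (64 : k)*γ₂^2*γ₃^2 + (64 : k)*γ₁*γ₃*a + (64 : k)*γ₁*γ₂*a + (128 : k)*γ₁*γ₂*γ₃^2 + (128 : k)*γ₁*γ₂^2*γ₃ + (64 : k)*γ₁^2*γ₃^2 + (128 : k)*γ₁^2*γ₂*γ₃ + (64 : k)*γ₁^2*γ₂^2) * hA + ((-64 : k)*γ₂^3*γ₃^2 + (64 :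 k)*γ₂^4*γ₃ + (-32 : k)*γ₂^5 + (-192 : k)*γ₁*γ₂^2*γ₃^2 + (64 : k)*γ₁*γ₂^3*γ₃ + (-48 : k)*γ₁*γ₂^4 + (-192 : k)*γ₁^2*γ₂*γ₃^2 + (-432 : k)*γ₁^2*γ₂^2*γ₃ + (112 : k)*γ₁^2*γ₂^3 + (-64 : k)*γ₁^3*γ₃^2 + (64 : k)*γ₁^3*γ₂*γ₃ + (64 : k)*γ₁^4*γ₃ + (-64 : k)*γ₁^4*γ₂) * hs1 + ((32 : k)*γ₂^5 + (80 : k)*γ₁*γ₂^4 + (-64 : k)*γ₁^2*γ₂^3 + (-176 : k)*γ₁^3*γ₂^2 + (64 : k)*γ₁^4*γ₂ + (64 : k)*γ₁^5) * h23)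
  have hprod : (xQ - γ₁) * (xQ - γ₂) * (xQ - γ₃) = yQ^2 := by
    linear_combination ((-1 : k)*xQ^2) * hs1 + ((-1 : k)) * hq + ((-1 : k)) * hB + (xQ) * hA
  have hx1 : xQ - γ₁ ≠ 0 := by
    intro h0; apply hyQ
    have : yQ^2 = 0 := by rw [← hprod, h0]; ring
    exact pow_eq_zero_iff (two_ne_zero) |>.mp this
  have hx2 : xQ - γ₂ ≠ 0 := by
    intro h0; apply hyQ
    have : yQ^2 = 0 := by rw [← hprod, h0]; ring
    exact pow_eq_zero_iff (two_ne_zero) |>.mp this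
  have hx3 : xQ - γ₃ ≠ 0 := by
    intro h0; apply hyQ
    have : yQ^2 = 0 := by rw [← hprod, h0]; ring
    exact pow_eq_zero_iff (two_ne_zero) |>.mp this
  have hns : ∀ x y : k, y^2 = x^3 + a*x + b → (shortWCurve a b).Nonsingular x y :=
    fun x y hxy => (WeierstrassCurve.Affine.equation_iff_nonsingular_of_Δ_ne_zero (W := shortWCurve a b) hΔ').mp ((equation_short a b x y).mpr hxy)
  -- data for the forward map
  have hw34 : ∀ w1 w2 : k, w1^2 = xQ - γ₁ → w2^2 = xQ - γ₂ →
      (yQ/(w1*w2))^2 = xQ - γ₃ ∧ w1*w2*(yQ/(w1*w2)) = yQ := by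
    intro w1 w2 hw1 hw2
    have hw1ne : w1 ≠ 0 := by intro h0; exact hx1 (by rw [← hw1, h0]; ring)
    have hw2ne : w2 ≠ 0 := by intro h0; exact hx2 (by rw [← hw2, h0]; ring)
    have h12ne : w1*w2 ≠ 0 := mul_ne_zero hw1ne hw2ne
    constructor
    · rw [div_pow, div_eq_iff (pow_ne_zero 2 h12ne)]
      linear_combination -hprod - ((xQ-γ₃)*w2^2)*hw1 - ((xQ-γ₃)*(xQ-γ₁))*hw2
    · rw [mul_comm, div_mul_cancel₀ _ h12ne]
  have hCORE := fun (w1 w2 : k) (hw1 : w1^2 = xQ - γ₁) (hw2 : w2^2 = xQ - γ₂) =>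
    core γ₁ γ₂ γ₃ a b xQ yQ w1 w2 (yQ/(w1*w2)) hs1 hA hB hq hw1 hw2
      (hw34 w1 w2 hw1 hw2).1 (hw34 w1 w2 hw1 hw2).2
  have hYne : ∀ (w1 w2 : k), w1^2 = xQ - γ₁ → w2^2 = xQ - γ₂ →
      (w1+w2)*(w2+(yQ/(w1*w2)))*((yQ/(w1*w2))+w1) ≠ 0 :=
    fun w1 w2 hw1 hw2 =>
      yp_ne γ₁ γ₂ γ₃ xQ w1 w2 (yQ/(w1*w2)) hn12 hn13 hn23 hw1 hw2 (hw34 w1 w2 hw1 hw2).1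
  have hNS : ∀ (w1 w2 : k), w1^2 = xQ - γ₁ → w2^2 = xQ - γ₂ →
      (shortWCurve a b).Nonsingular
        (xQ + w1*w2 + w2*(yQ/(w1*w2)) + (yQ/(w1*w2))*w1)
        ((w1+w2)*(w2+(yQ/(w1*w2)))*((yQ/(w1*w2))+w1)) :=
    fun w1 w2 hw1 hw2 => hns _ _ (hCORE w1 w2 hw1 hw2).1
  have hDBL : ∀ (w1 w2 : k) (hw1 : w1^2 = xQ - γ₁) (hw2 : w2^2 = xQ - γ₂),
      2 • Point.some _ _ (hNS w1 w2 hw1 hw2) = Point.some xQ yQ hQ :=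
    fun w1 w2 hw1 hw2 =>
      double_some h2 (hNS w1 w2 hw1 hw2) hQ (hYne w1 w2 hw1 hw2)
        (hCORE w1 w2 hw1 hw2).2.1 (hCORE w1 w2 hw1 hw2).2.2.1
  -- the forward map as a function between the two subtypes
  set ωS : Set (k × k) := {ω : k × k | ω.1 ^ 2 = xQ - γ₁ ∧ ω.2 ^ 2 = xQ - γ₂} with hωS
  set PS : Set (shortWCurve a b).Point :=
    {P : (shortWCurve a b).Point | 2 • P = WeierstrassCurve.Affine.Point.some xQ yQ hQ} with hPS
  let F : ωS → PS := fun ω => ⟨Point.some _ _ (hNS ω.1.1 ω.1.2 ω.2.1 ω.2.2),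
    hDBL ω.1.1 ω.1.2 ω.2.1 ω.2.2⟩
  have hFinj : Function.Injective F := by
    rintro ⟨⟨w1, w2⟩, hw⟩ ⟨⟨w1', w2'⟩, hw'⟩ h
    obtain ⟨hw1, hw2⟩ := hw
    obtain ⟨hw1', hw2'⟩ := hw'
    have h' : Point.some _ _ (hNS w1 w2 hw1 hw2) = Point.some _ _ (hNS w1' w2' hw1' hw2') :=
      congrArg Subtype.val h
    injection h' with hXX hYY
    have k1 := (hCORE w1 w2 hw1 hw2).2.2.2.1
    have k1' := (hCORE w1' w2' hw1' hw2').2.2.2.1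
    have k2 := (hCORE w1 w2 hw1 hw2).2.2.2.2
    have k2' := (hCORE w1' w2' hw1' hw2').2.2.2.2
    rw [hXX, hYY] at k1 k2
    have hyne' : 2*((w1'+w2')*(w2'+(yQ/(w1'*w2')))*((yQ/(w1'*w2'))+w1')) ≠ 0 :=
      mul_ne_zero h2 (hYne w1' w2' hw1' hw2')
    have e1 : w1 = w1' := mul_right_cancel₀ hyne' (k1.symm.trans k1')
    have e2 : w2 = w2' := mul_right_cancel₀ hyne' (k2.symm.trans k2')
    apply Subtype.ext
    simp only [Prod.mk.injEq]
    exact ⟨e1, e2⟩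
  have hFsurj : Function.Surjective F := by
    rintro ⟨P, hP⟩
    have hP' : 2 • P = Point.some xQ yQ hQ := hP
    rcases P with _ | @⟨x, y, hxy⟩
    · rw [← Point.zero_def, smul_zero] at hP'
      exact absurd hP'.symm (Point.some_ne_zero hQ)
    obtain ⟨hy0, hxE, hyE⟩ := of_double_some h2 hxy hQ hP'
    have hcurve : y^2 = x^3 + a*x + b := by
      have h := (equation_short a b x y).mp hxy.1
      linear_combination h
    obtain ⟨w1, w2, hw1, hw2, hXx, hYy⟩ :=
      backward h2 γ₁ γ₂ γ₃ a b xQ yQ x y hs1 hA hB hx1 hx2 hy0 hcurve hxE hyE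
    refine ⟨⟨(w1, w2), ⟨hw1, hw2⟩⟩, ?_⟩
    apply Subtype.ext
    exact some_eq_some hXx hYy
  -- finiteness of the ω set
  have hroot : ∀ c : k, ({r : k | r^2 = c}).Finite := by
    intro c
    apply Set.Finite.subset (Polynomial.finite_setOf_isRoot
      (Polynomial.X_pow_sub_C_ne_zero (n := 2) (by norm_num) c))
    intro r hr
    simp only [Set.mem_setOf_eq, Polynomial.IsRoot, eval_sub, eval_pow, eval_X, eval_C]
    rw [sub_eq_zero]
    exact hr
  have hωfin : ωS.Finite := by
    apply Set.Finite.subset (Set.Finite.prod (hroot (xQ - γ₁)) (hroot (xQ - γ₂)))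
    intro ω hω
    exact Set.mem_prod.mpr ⟨hω.1, hω.2⟩
  have E : ωS ≃ PS := Equiv.ofBijective F ⟨hFinj, hFsurj⟩
  haveI : Finite ωS := hωfin.to_subtype
  haveI hPfinite : Finite PS := Finite.of_equiv _ E
  refine ⟨Set.finite_coe_iff.mp hPfinite, hωfin, Nat.card_congr E.symm⟩
end

section
/- Let P = (x_P, y_P) and Q = (x_Q, y_Q) be affine points of E(k) with 3•P = Q. Then (3x_P⁴ + 6a·x_P² + 12b·x_P − a²)·(x_Q − x_P)² + 4y_P²·(3x_P² + a)·(x_Q − x_P) + 8y_P³·(y_P + y_Q) = 0. (Equivalently, the second-order Taylor expansion of the y-coordinate at P, evaluated at x_Q, equals −y_Q; this is the vanishing of the determinant of the linear system defining the function g_P with divisor 3(P) + (−Q) − 4(O) for ℓ = 3.) -/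
open WeierstrassCurve.Affine

lemma some_eq_some' {F : Type*} [Field F] {W : WeierstrassCurve.Affine F}
    {x1 y1 x2 y2 : F} (h1 : W.Nonsingular x1 y1) (h2 : W.Nonsingular x2 y2)
    (hx : x1 = x2) (hy : y1 = y2) : Point.some _ _ h1 = Point.some _ _ h2 := by
  subst hx; subst hy; rfl

lemma some_inj' {F : Type*} [Field F] {W : WeierstrassCurve.Affine F}
    {x1 y1 x2 y2 : F} {h1 : W.Nonsingular x1 y1} {h2 : W.Nonsingular x2 y2}
    (h : Point.some _ _ h1 = Point.some _ _ h2) : x1 = x2 ∧ y1 = y2 := by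
  cases h; exact ⟨rfl, rfl⟩

set_option maxHeartbeats 4000000 in
open Classical in
theorem stmt_13 {k : Type*} [Field k] (h2 : (2 : k) ≠ 0) (h3 : (3 : k) ≠ 0)
    (a b : k) (hΔ : -16 * (4 * a ^ 3 + 27 * b ^ 2) ≠ 0)
    (xP yP xQ yQ : k)
    (hP : (shortWCurve a b).Nonsingular xP yP)
    (hQ : (shortWCurve a b).Nonsingular xQ yQ)
    (hPQ : 3 • (WeierstrassCurve.Affine.Point.some xP yP hP)
        = WeierstrassCurve.Affine.Point.some xQ yQ hQ) :
    (3 * xP ^ 4 + 6 * a * xP ^ 2 + 12 * b * xP - a ^ 2) * (xQ - xP) ^ 2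
      + 4 * yP ^ 2 * (3 * xP ^ 2 + a) * (xQ - xP)
      + 8 * yP ^ 3 * (yP + yQ) = 0 := by
  set W := shortWCurve a b with hW
  have hEP : yP ^ 2 = xP ^ 3 + a * xP + b := by
    have h := hP.left; rw [equation_iff] at h; simp [hW, shortWCurve] at h
    linear_combination h
  have h3' : Point.some _ _ hP + Point.some _ _ hP + Point.some _ _ hP = Point.some _ _ hQ := by
    rw [← hPQ]; abel
  by_cases hy0 : yP = W.negY xP yP
  · -- yP = 0, 2P = 0, so Q = P
    have hyP0 : yP = 0 := by
      have h : yP = -yP := by simpa [hW, shortWCurve, negY] using hy0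
      have h2y : (2 : k) * yP = 0 := by linear_combination h
      exact (mul_eq_zero.mp h2y).resolve_left h2
    rw [Point.add_of_Y_eq rfl hy0, zero_add] at h3'
    obtain ⟨hx1, hy1⟩ := some_inj' h3'
    rw [← hx1, ← hy1, hyP0]; ring
  · have hyP : yP ≠ 0 := fun h0 => hy0 (by simp [hW, shortWCurve, negY, h0])
    have h2yP : (2 : k) * yP ≠ 0 := mul_ne_zero h2 hyP
    have hdouble := Point.add_self_of_Y_ne (h₁ := hP) hy0
    rw [hdouble] at h3'
    set L := W.slope xP xP yP yP with hLdef
    have hL : L = (3 * xP ^ 2 + a) / (2 * yP) := by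
      rw [hLdef, slope_of_Y_ne rfl hy0]
      simp [hW, shortWCurve, negY]
      rw [two_mul]
    set x₂ := W.addX xP xP L with hx2def
    set y₂ := W.addY xP xP yP L with hy2def
    have hR : W.Nonsingular x₂ y₂ := nonsingular_add hP hP fun hxy => hy0 hxy.2
    have ha1 : W.a₁ = 0 := rfl
    have ha2 : W.a₂ = 0 := rfl
    have ha3 : W.a₃ = 0 := rfl
    have hx2 : x₂ = L ^ 2 - 2 * xP := by
      rw [hx2def, addX, ha1, ha2]; ring
    have hy2 : y₂ = -(L * (x₂ - xP) + yP) := by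
      rw [hy2def, addY, negAddY, ← hx2def, negY, ha1, ha3]; ring
    by_cases hxx : x₂ = xP
    · by_cases hyy : y₂ = W.negY xP yP
      · rw [Point.add_of_Y_eq hxx hyy] at h3'
        exact absurd h3' (by simp)
      · -- y₂ = yP forced, so 2P = P, contradiction
        have hE2 : y₂ ^ 2 = x₂ ^ 3 + a * x₂ + b := by
          have h := hR.left; rw [equation_iff] at h; simp [hW, shortWCurve] at h
          linear_combination h
        have hne : y₂ ≠ -yP := by simpa [hW, shortWCurve, negY] using hyy
        have hsq : (y₂ - yP) * (y₂ + yP) = 0 := by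
          linear_combination hE2 - hEP + (x₂ ^ 2 + x₂ * xP + xP ^ 2 + a) * hxx
        have hy2P : y₂ = yP := by
          rcases mul_eq_zero.mp hsq with h | h
          · linear_combination h
          · exact absurd (by linear_combination h) hne
        have hRP : Point.some _ _ hR = Point.some _ _ hP := some_eq_some' hR hP hxx hy2P
        rw [hRP] at hdouble
        have : Point.some _ _ hP = 0 := by
          have := hdouble
          exact add_eq_left.mp this
        exact absurd this (by simp)
    · -- main case
      rw [Point.add_of_X_ne hxx] at h3'
      obtain ⟨hxQ, hyQ⟩ := some_inj' h3'
      set L2 := W.slope x₂ xP y₂ yP with hL2def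
      have hL2 : L2 = (y₂ - yP) / (x₂ - xP) := by rw [hL2def, slope_of_X_ne hxx]
      rw [← hLdef, ← hy2def] at hyQ
      have hxQ' : xQ = L2 ^ 2 - x₂ - xP := by
        rw [← hxQ, addX, ha1, ha2]; ring
      have hyQ' : yQ = -(L2 * (xQ - x₂) + y₂) := by
        rw [← hyQ, addY, negAddY, hxQ, negY, ha1, ha3]; ring
      have hd : x₂ - xP ≠ 0 := sub_ne_zero.mpr hxx
      -- polynomial relations
      have h1 : 4 * yP ^ 2 * x₂ = (3 * xP ^ 2 + a) ^ 2 - 8 * xP * yP ^ 2 := by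
        rw [hx2, hL]; field_simp; all_goals ring
      have hr2 : 8 * yP ^ 3 * y₂ = -(4 * yP ^ 2 * (3 * xP ^ 2 + a) * (x₂ - xP) + 8 * yP ^ 4) := by
        rw [hy2, hL]; field_simp; all_goals ring
      have hr3 : xQ * (x₂ - xP) ^ 2 = (y₂ - yP) ^ 2 - (x₂ + xP) * (x₂ - xP) ^ 2 := by
        rw [hxQ', hL2]; field_simp; all_goals ring
      have hr4 : yQ * (x₂ - xP) = -((y₂ - yP) * (xQ - x₂) + y₂ * (x₂ - xP)) := by
        rw [hyQ', hL2]; field_simp; all_goals ring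
      have key : ((2 * yP) ^ 26 * (x₂ - xP) ^ 5) *
          ((3 * xP ^ 4 + 6 * a * xP ^ 2 + 12 * b * xP - a ^ 2) * (xQ - xP) ^ 2
            + 4 * yP ^ 2 * (3 * xP ^ 2 + a) * (xQ - xP)
            + 8 * yP ^ 3 * (yP + yQ)) = 0 := by
        linear_combination
          (536870912 * yP^29 * x₂^4 +
           -2147483648 * xP * yP^29 * x₂^3 +
           3221225472 * xP^2 * yP^29 * x₂^2 +
           -2147483648 * xP^3 * yP^29 * x₂ +
           536870912 * xP^4 * yP^29) * hr4 +
          (-67108864 * yP^26 * a^2 * x₂ * y₂^2 +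
           -67108864 * yP^26 * a^2 * x₂^3 * xQ +
           67108864 * yP^26 * a^2 * x₂^4 +
           134217728 * yP^27 * a^2 * x₂ * y₂ +
           268435456 * yP^28 * a * x₂^3 +
           -67108864 * yP^28 * a^2 * x₂ +
           -536870912 * yP^29 * x₂^2 * y₂ +
           536870912 * yP^30 * x₂^2 +
           805306368 * xP * yP^26 * b * x₂ * y₂^2 +
           805306368 * xP * yP^26 * b * x₂^3 * xQ +
           -805306368 * xP * yP^26 * b * x₂^4 +
           67108864 * xP * yP^26 * a^2 * y₂^2 +
           201326592 * xP * yP^26 * a^2 * x₂^2 * xQ +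
           -1610612736 * xP * yP^27 * b * x₂ * y₂ +
           -134217728 * xP * yP^27 * a^2 * y₂ +
           805306368 * xP * yP^28 * b * x₂ +
           -805306368 * xP * yP^28 * a * x₂^2 +
           67108864 * xP * yP^28 * a^2 +
           1073741824 * xP * yP^29 * x₂ * y₂ +
           -1073741824 * xP * yP^30 * x₂ +
           -805306368 * xP^2 * yP^26 * b * y₂^2 +
           -2415919104 * xP^2 * yP^26 * b * x₂^2 * xQ +
           402653184 * xP^2 * yP^26 * a * x₂ * y₂^2 +
           402653184 * xP^2 * yP^26 * a * x₂^3 * xQ +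
           -402653184 * xP^2 * yP^26 * a * x₂^4 +
           -201326592 * xP^2 * yP^26 * a^2 * x₂ * xQ +
           -402653184 * xP^2 * yP^26 * a^2 * x₂^2 +
           1610612736 * xP^2 * yP^27 * b * y₂ +
           -805306368 * xP^2 * yP^27 * a * x₂ * y₂ +
           805306368 * xP^2 * yP^28 * x₂^3 +
           -805306368 * xP^2 * yP^28 * b +
           1207959552 * xP^2 * yP^28 * a * x₂ +
           -536870912 * xP^2 * yP^29 * y₂ +
           536870912 * xP^2 * yP^30 +
           2415919104 * xP^3 * yP^26 * b * x₂ * xQ +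
           4831838208 * xP^3 * yP^26 * b * x₂^2 +
           -402653184 * xP^3 * yP^26 * a * y₂^2 +
           -1207959552 * xP^3 * yP^26 * a * x₂^2 * xQ +
           67108864 * xP^3 * yP^26 * a^2 * xQ +
           536870912 * xP^3 * yP^26 * a^2 * x₂ +
           805306368 * xP^3 * yP^27 * a * y₂ +
           -2415919104 * xP^3 * yP^28 * x₂^2 +
           -671088640 * xP^3 * yP^28 * a +
           201326592 * xP^4 * yP^26 * x₂ * y₂^2 +
           201326592 * xP^4 * yP^26 * x₂^3 * xQ +
           -201326592 * xP^4 * yP^26 * x₂^4 +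
           -805306368 * xP^4 * yP^26 * b * xQ +
           -6442450944 * xP^4 * yP^26 * b * x₂ +
           1207959552 * xP^4 * yP^26 * a * x₂ * xQ +
           2415919104 * xP^4 * yP^26 * a * x₂^2 +
           -201326592 * xP^4 * yP^26 * a^2 +
           -402653184 * xP^4 * yP^27 * x₂ * y₂ +
           2617245696 * xP^4 * yP^28 * x₂ +
           -201326592 * xP^5 * yP^26 * y₂^2 +
           -603979776 * xP^5 * yP^26 * x₂^2 * xQ +
           2415919104 * xP^5 * yP^26 * b +
           -402653184 * xP^5 * yP^26 * a * xQ +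
           -3221225472 * xP^5 * yP^26 * a * x₂ +
           402653184 * xP^5 * yP^27 * y₂ +
           -1006632960 * xP^5 * yP^28 +
           603979776 * xP^6 * yP^26 * x₂ * xQ +
           1207959552 * xP^6 * yP^26 * x₂^2 +
           1207959552 * xP^6 * yP^26 * a +
           -201326592 * xP^7 * yP^26 * xQ +
           -1610612736 * xP^7 * yP^26 * x₂ +
           603979776 * xP^8 * yP^26) * hr3 +
          (1048576 * yP^20 * a^5 * x₂^4 +
           -2097152 * yP^21 * a^4 * x₂^3 * y₂ +
           4194304 * yP^22 * a^3 * x₂^2 * y₂^2 +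
           -8388608 * yP^22 * a^3 * x₂^5 +
           14680064 * yP^22 * a^4 * x₂^3 +
           -8388608 * yP^23 * a^2 * x₂ * y₂^3 +
           16777216 * yP^23 * a^2 * x₂^4 * y₂ +
           -25165824 * yP^23 * a^3 * x₂^2 * y₂ +
           41943040 * yP^24 * a^2 * x₂ * y₂^2 +
           -83886080 * yP^24 * a^2 * x₂^4 +
           71303168 * yP^24 * a^3 * x₂^2 +
           67108864 * yP^25 * a * x₂^3 * y₂ +
           -92274688 * yP^25 * a^2 * x₂ * y₂ +
           -67108864 * yP^26 * x₂^2 * y₂^2 +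
           67108864 * yP^26 * x₂^5 +
           -268435456 * yP^26 * a * x₂^3 +
           125829120 * yP^26 * a^2 * x₂ +
           268435456 * yP^27 * x₂^2 * y₂ +
           -469762048 * yP^28 * x₂^2 +
           -12582912 * xP * yP^20 * a^3 * b * x₂^4 +
           -4194304 * xP * yP^20 * a^5 * x₂^3 +
           25165824 * xP * yP^21 * a^2 * b * x₂^3 * y₂ +
           6291456 * xP * yP^21 * a^4 * x₂^2 * y₂ +
           -50331648 * xP * yP^22 * a * b * x₂^2 * y₂^2 +
           100663296 * xP * yP^22 * a * b * x₂^5 +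
           -176160768 * xP * yP^22 * a^2 * b * x₂^3 +
           -8388608 * xP * yP^22 * a^3 * x₂ * y₂^2 +
           16777216 * xP * yP^22 * a^3 * x₂^4 +
           -44040192 * xP * yP^22 * a^4 * x₂^2 +
           100663296 * xP * yP^23 * b * x₂ * y₂^3 +
           -201326592 * xP * yP^23 * b * x₂^4 * y₂ +
           301989888 * xP * yP^23 * a * b * x₂^2 * y₂ +
           8388608 * xP * yP^23 * a^2 * y₂^3 +
           -16777216 * xP * yP^23 * a^2 * x₂^3 * y₂ +
           50331648 * xP * yP^23 * a^3 * x₂ * y₂ +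
           -503316480 * xP * yP^24 * b * x₂ * y₂^2 +
           603979776 * xP * yP^24 * b * x₂^4 +
           -855638016 * xP * yP^24 * a * b * x₂^2 +
           -41943040 * xP * yP^24 * a^2 * y₂^2 +
           184549376 * xP * yP^24 * a^2 * x₂^3 +
           -142606336 * xP * yP^24 * a^3 * x₂ +
           1107296256 * xP * yP^25 * b * x₂ * y₂ +
           -201326592 * xP * yP^25 * a * x₂^2 * y₂ +
           92274688 * xP * yP^25 * a^2 * y₂ +
           134217728 * xP * yP^26 * x₂ * y₂^2 +
           -134217728 * xP * yP^26 * x₂^4 +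
           -1509949440 * xP * yP^26 * b * x₂ +
           805306368 * xP * yP^26 * a * x₂^2 +
           -125829120 * xP * yP^26 * a^2 +
           -536870912 * xP * yP^27 * x₂ * y₂ +
           939524096 * xP * yP^28 * x₂ +
           50331648 * xP^2 * yP^20 * a^3 * b * x₂^3 +
           3145728 * xP^2 * yP^20 * a^4 * x₂^4 +
           6291456 * xP^2 * yP^20 * a^5 * x₂^2 +
           -75497472 * xP^2 * yP^21 * a^2 * b * x₂^2 * y₂ +
           -6291456 * xP^2 * yP^21 * a^4 * x₂ * y₂ +
           100663296 * xP^2 * yP^22 * a * b * x₂ * y₂^2 +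
           -201326592 * xP^2 * yP^22 * a * b * x₂^4 +
           -12582912 * xP^2 * yP^22 * a^2 * x₂^2 * y₂^2 +
           25165824 * xP^2 * yP^22 * a^2 * x₂^5 +
           528482304 * xP^2 * yP^22 * a^2 * b * x₂^2 +
           4194304 * xP^2 * yP^22 * a^3 * y₂^2 +
           16777216 * xP^2 * yP^22 * a^3 * x₂^3 +
           44040192 * xP^2 * yP^22 * a^4 * x₂ +
           -100663296 * xP^2 * yP^23 * b * y₂^3 +
           201326592 * xP^2 * yP^23 * b * x₂^3 * y₂ +
           50331648 * xP^2 * yP^23 * a * x₂ * y₂^3 +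
           -100663296 * xP^2 * yP^23 * a * x₂^4 * y₂ +
           -603979776 * xP^2 * yP^23 * a * b * x₂ * y₂ +
           25165824 * xP^2 * yP^23 * a^2 * x₂^2 * y₂ +
           -25165824 * xP^2 * yP^23 * a^3 * y₂ +
           503316480 * xP^2 * yP^24 * b * y₂^2 +
           -603979776 * xP^2 * yP^24 * b * x₂^3 +
           -251658240 * xP^2 * yP^24 * a * x₂ * y₂^2 +
           100663296 * xP^2 * yP^24 * a * x₂^4 +
           1711276032 * xP^2 * yP^24 * a * b * x₂ +
           -264241152 * xP^2 * yP^24 * a^2 * x₂^2 +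
           71303168 * xP^2 * yP^24 * a^3 +
           201326592 * xP^2 * yP^25 * x₂^3 * y₂ +
           -1107296256 * xP^2 * yP^25 * b * y₂ +
           754974720 * xP^2 * yP^25 * a * x₂ * y₂ +
           -67108864 * xP^2 * yP^26 * y₂^2 +
           -939524096 * xP^2 * yP^26 * x₂^3 +
           1509949440 * xP^2 * yP^26 * b +
           -1560281088 * xP^2 * yP^26 * a * x₂ +
           268435456 * xP^2 * yP^27 * y₂ +
           -469762048 * xP^2 * yP^28 +
           -113246208 * xP^3 * yP^20 * a^2 * b * x₂^4 +
           -75497472 * xP^3 * yP^20 * a^3 * b * x₂^2 +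
           -12582912 * xP^3 * yP^20 * a^4 * x₂^3 +
           -4194304 * xP^3 * yP^20 * a^5 * x₂ +
           150994944 * xP^3 * yP^21 * a * b * x₂^3 * y₂ +
           75497472 * xP^3 * yP^21 * a^2 * b * x₂ * y₂ +
           2097152 * xP^3 * yP^21 * a^4 * y₂ +
           -150994944 * xP^3 * yP^22 * b * x₂^2 * y₂^2 +
           301989888 * xP^3 * yP^22 * b * x₂^5 +
           -50331648 * xP^3 * yP^22 * a * b * y₂^2 +
           -1258291200 * xP^3 * yP^22 * a * b * x₂^3 +
           25165824 * xP^3 * yP^22 * a^2 * x₂ * y₂^2 +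
           -50331648 * xP^3 * yP^22 * a^2 * x₂^4 +
           -528482304 * xP^3 * yP^22 * a^2 * b * x₂ +
           -67108864 * xP^3 * yP^22 * a^3 * x₂^2 +
           -14680064 * xP^3 * yP^22 * a^4 +
           1509949440 * xP^3 * yP^23 * b * x₂^2 * y₂ +
           -50331648 * xP^3 * yP^23 * a * y₂^3 +
           100663296 * xP^3 * yP^23 * a * x₂^3 * y₂ +
           301989888 * xP^3 * yP^23 * a * b * y₂ +
           -67108864 * xP^3 * yP^23 * a^2 * x₂ * y₂ +
           -4378853376 * xP^3 * yP^24 * b * x₂^2 +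
           251658240 * xP^3 * yP^24 * a * y₂^2 +
           503316480 * xP^3 * yP^24 * a * x₂^3 +
           -855638016 * xP^3 * yP^24 * a * b +
           310378496 * xP^3 * yP^24 * a^2 * x₂ +
           -603979776 * xP^3 * yP^25 * x₂^2 * y₂ +
           -620756992 * xP^3 * yP^25 * a * y₂ +
           2952790016 * xP^3 * yP^26 * x₂^2 +
           1023410176 * xP^3 * yP^26 * a +
           452984832 * xP^4 * yP^20 * a^2 * b * x₂^3 +
           -31457280 * xP^4 * yP^20 * a^3 * x₂^4 +
           50331648 * xP^4 * yP^20 * a^3 * b * x₂ +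
           18874368 * xP^4 * yP^20 * a^4 * x₂^2 +
           1048576 * xP^4 * yP^20 * a^5 +
           -452984832 * xP^4 * yP^21 * a * b * x₂^2 * y₂ +
           62914560 * xP^4 * yP^21 * a^2 * x₂^3 * y₂ +
           -25165824 * xP^4 * yP^21 * a^2 * b * y₂ +
           301989888 * xP^4 * yP^22 * b * x₂ * y₂^2 +
           -603979776 * xP^4 * yP^22 * b * x₂^4 +
           -88080384 * xP^4 * yP^22 * a * x₂^2 * y₂^2 +
           176160768 * xP^4 * yP^22 * a * x₂^5 +
           3976200192 * xP^4 * yP^22 * a * b * x₂^2 +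
           -12582912 * xP^4 * yP^22 * a^2 * y₂^2 +
           -490733568 * xP^4 * yP^22 * a^2 * x₂^3 +
           176160768 * xP^4 * yP^22 * a^2 * b +
           58720256 * xP^4 * yP^22 * a^3 * x₂ +
           25165824 * xP^4 * yP^23 * x₂ * y₂^3 +
           -50331648 * xP^4 * yP^23 * x₂^4 * y₂ +
           -2818572288 * xP^4 * yP^23 * b * x₂ * y₂ +
           830472192 * xP^4 * yP^23 * a * x₂^2 * y₂ +
           41943040 * xP^4 * yP^23 * a^2 * y₂ +
           -125829120 * xP^4 * yP^24 * x₂ * y₂^2 +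
           -150994944 * xP^4 * yP^24 * x₂^4 +
           8153726976 * xP^4 * yP^24 * b * x₂ +
           -3611295744 * xP^4 * yP^24 * a * x₂^2 +
           -146800640 * xP^4 * yP^24 * a^2 +
           880803840 * xP^4 * yP^25 * x₂ * y₂ +
           -3263168512 * xP^4 * yP^26 * x₂ +
           -339738624 * xP^5 * yP^20 * a * b * x₂^4 +
           -679477248 * xP^5 * yP^20 * a^2 * b * x₂^2 +
           125829120 * xP^5 * yP^20 * a^3 * x₂^3 +
           -12582912 * xP^5 * yP^20 * a^3 * b +
           -12582912 * xP^5 * yP^20 * a^4 * x₂ +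
           226492416 * xP^5 * yP^21 * b * x₂^3 * y₂ +
           452984832 * xP^5 * yP^21 * a * b * x₂ * y₂ +
           -188743680 * xP^5 * yP^21 * a^2 * x₂^2 * y₂ +
           -150994944 * xP^5 * yP^22 * b * y₂^2 +
           -2189426688 * xP^5 * yP^22 * b * x₂^3 +
           176160768 * xP^5 * yP^22 * a * x₂ * y₂^2 +
           -352321536 * xP^5 * yP^22 * a * x₂^4 +
           -3875536896 * xP^5 * yP^22 * a * b * x₂ +
           1522532352 * xP^5 * yP^22 * a^2 * x₂^2 +
           -16777216 * xP^5 * yP^22 * a^3 +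
           -25165824 * xP^5 * yP^23 * y₂^3 +
           50331648 * xP^5 * yP^23 * x₂^3 * y₂ +
           1308622848 * xP^5 * yP^23 * b * y₂ +
           -1560281088 * xP^5 * yP^23 * a * x₂ * y₂ +
           125829120 * xP^5 * yP^24 * y₂^2 +
           1056964608 * xP^5 * yP^24 * x₂^3 +
           -3774873600 * xP^5 * yP^24 * b +
           5309988864 * xP^5 * yP^24 * a * x₂ +
           -478150656 * xP^5 * yP^25 * y₂ +
           1317011456 * xP^5 * yP^26 +
           1358954496 * xP^6 * yP^20 * a * b * x₂^3 +
           -169869312 * xP^6 * yP^20 * a^2 * x₂^4 +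
           452984832 * xP^6 * yP^20 * a^2 * b * x₂ +
           -188743680 * xP^6 * yP^20 * a^3 * x₂^2 +
           3145728 * xP^6 * yP^20 * a^4 +
           -679477248 * xP^6 * yP^21 * b * x₂^2 * y₂ +
           150994944 * xP^6 * yP^21 * a * x₂^3 * y₂ +
           -150994944 * xP^6 * yP^21 * a * b * y₂ +
           188743680 * xP^6 * yP^21 * a^2 * x₂ * y₂ +
           -37748736 * xP^6 * yP^22 * x₂^2 * y₂^2 +
           75497472 * xP^6 * yP^22 * x₂^5 +
           7172259840 * xP^6 * yP^22 * b * x₂^2 +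
           -88080384 * xP^6 * yP^22 * a * y₂^2 +
           -1409286144 * xP^6 * yP^22 * a * x₂^3 +
           1258291200 * xP^6 * yP^22 * a * b +
           -1497366528 * xP^6 * yP^22 * a^2 * x₂ +
           377487360 * xP^6 * yP^23 * x₂^2 * y₂ +
           729808896 * xP^6 * yP^23 * a * y₂ +
           -2906652672 * xP^6 * yP^24 * x₂^2 +
           -2302672896 * xP^6 * yP^24 * a +
           -339738624 * xP^7 * yP^20 * b * x₂^4 +
           -2038431744 * xP^7 * yP^20 * a * b * x₂^2 +
           679477248 * xP^7 * yP^20 * a^2 * x₂^3 +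
           -113246208 * xP^7 * yP^20 * a^2 * b +
           125829120 * xP^7 * yP^20 * a^3 * x₂ +
           679477248 * xP^7 * yP^21 * b * x₂ * y₂ +
           -452984832 * xP^7 * yP^21 * a * x₂^2 * y₂ +
           -62914560 * xP^7 * yP^21 * a^2 * y₂ +
           75497472 * xP^7 * yP^22 * x₂ * y₂^2 +
           -150994944 * xP^7 * yP^22 * x₂^4 +
           -6870269952 * xP^7 * yP^22 * b * x₂ +
           4580179968 * xP^7 * yP^22 * a * x₂^2 +
           490733568 * xP^7 * yP^22 * a^2 +
           -704643072 * xP^7 * yP^23 * x₂ * y₂ +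
           3246391296 * xP^7 * yP^24 * x₂ +
           1358954496 * xP^8 * yP^20 * b * x₂^3 +
           -254803968 * xP^8 * yP^20 * a * x₂^4 +
           1358954496 * xP^8 * yP^20 * a * b * x₂ +
           -1019215872 * xP^8 * yP^20 * a^2 * x₂^2 +
           -31457280 * xP^8 * yP^20 * a^3 +
           56623104 * xP^8 * yP^21 * x₂^3 * y₂ +
           -226492416 * xP^8 * yP^21 * b * y₂ +
           452984832 * xP^8 * yP^21 * a * x₂ * y₂ +
           -37748736 * xP^8 * yP^22 * y₂^2 +
           -547356672 * xP^8 * yP^22 * x₂^3 +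
           2189426688 * xP^8 * yP^22 * b +
           -4404019200 * xP^8 * yP^22 * a * x₂ +
           327155712 * xP^8 * yP^23 * y₂ +
           -1245708288 * xP^8 * yP^24 +
           -2038431744 * xP^9 * yP^20 * b * x₂^2 +
           1019215872 * xP^9 * yP^20 * a * x₂^3 +
           -339738624 * xP^9 * yP^20 * a * b +
           679477248 * xP^9 * yP^20 * a^2 * x₂ +
           -169869312 * xP^9 * yP^21 * x₂^2 * y₂ +
           -150994944 * xP^9 * yP^21 * a * y₂ +
           1793064960 * xP^9 * yP^22 * x₂^2 +
           1409286144 * xP^9 * yP^22 * a +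
           -84934656 * xP^10 * yP^20 * x₂^4 +
           1358954496 * xP^10 * yP^20 * b * x₂ +
           -1528823808 * xP^10 * yP^20 * a * x₂^2 +
           -169869312 * xP^10 * yP^20 * a^2 +
           169869312 * xP^10 * yP^21 * x₂ * y₂ +
           -1717567488 * xP^10 * yP^22 * x₂ +
           339738624 * xP^11 * yP^20 * x₂^3 +
           -339738624 * xP^11 * yP^20 * b +
           1019215872 * xP^11 * yP^20 * a * x₂ +
           -56623104 * xP^11 * yP^21 * y₂ +
           547356672 * xP^11 * yP^22 +
           -509607936 * xP^12 * yP^20 * x₂^2 +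
           -254803968 * xP^12 * yP^20 * a +
           339738624 * xP^13 * yP^20 * x₂ +
           -84934656 * xP^14 * yP^20) * hr2 +
          (4194304 * yP^22 * a^4 * x₂^5 +
           -16777216 * yP^24 * a^2 * x₂^6 +
           67108864 * yP^24 * a^3 * x₂^4 +
           -134217728 * yP^26 * a * x₂^5 +
           402653184 * yP^26 * a^2 * x₂^3 +
           -268435456 * yP^28 * x₂^4 +
           1073741824 * yP^28 * a * x₂^2 +
           1073741824 * yP^30 * x₂ +
           50331648 * xP * yP^20 * a^6 * b +
           -50331648 * xP * yP^22 * a^2 * b * x₂^5 +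
           -20971520 * xP * yP^22 * a^4 * x₂^4 +
           201326592 * xP * yP^22 * a^4 * b * x₂ +
           -50331648 * xP * yP^22 * a^6 +
           201326592 * xP * yP^24 * b * x₂^6 +
           -805306368 * xP * yP^24 * a * b * x₂^4 +
           50331648 * xP * yP^24 * a^2 * x₂^5 +
           805306368 * xP * yP^24 * a^2 * b * x₂^2 +
           -268435456 * xP * yP^24 * a^3 * x₂^3 +
           805306368 * xP * yP^24 * a^3 * b +
           -201326592 * xP * yP^24 * a^4 * x₂ +
           -1610612736 * xP * yP^26 * b * x₂^3 +
           671088640 * xP * yP^26 * a * x₂^4 +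
           3221225472 * xP * yP^26 * a * b * x₂ +
           -2013265920 * xP * yP^26 * a^2 * x₂^2 +
           -805306368 * xP * yP^26 * a^3 +
           1073741824 * xP * yP^28 * x₂^3 +
           3221225472 * xP * yP^28 * b +
           -5368709120 * xP * yP^28 * a * x₂ +
           -4294967296 * xP * yP^30 +
           50331648 * xP^2 * yP^20 * a^7 +
           251658240 * xP^2 * yP^22 * a^2 * b * x₂^4 +
           41943040 * xP^2 * yP^22 * a^4 * x₂^3 +
           -1409286144 * xP^2 * yP^22 * a^4 * b +
           201326592 * xP^2 * yP^22 * a^5 * x₂ +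
           -603979776 * xP^2 * yP^24 * b * x₂^5 +
           100663296 * xP^2 * yP^24 * a * x₂^6 +
           3221225472 * xP^2 * yP^24 * a * b * x₂^3 +
           -201326592 * xP^2 * yP^24 * a^2 * x₂^4 +
           -4026531840 * xP^2 * yP^24 * a^2 * b * x₂ +
           1207959552 * xP^2 * yP^24 * a^3 * x₂^2 +
           2214592512 * xP^2 * yP^24 * a^4 +
           -402653184 * xP^2 * yP^26 * x₂^5 +
           4831838208 * xP^2 * yP^26 * b * x₂^2 +
           -536870912 * xP^2 * yP^26 * a * x₂^3 +
           -12884901888 * xP^2 * yP^26 * a * b +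
           8455716864 * xP^2 * yP^26 * a^2 * x₂ +
           1610612736 * xP^2 * yP^28 * x₂^2 +
           17179869184 * xP^2 * yP^28 * a +
           905969664 * xP^3 * yP^20 * a^5 * b +
           -301989888 * xP^3 * yP^22 * a * b * x₂^5 +
           -503316480 * xP^3 * yP^22 * a^2 * b * x₂^3 +
           2415919104 * xP^3 * yP^22 * a^3 * b * x₂ +
           -41943040 * xP^3 * yP^22 * a^4 * x₂^2 +
           -2315255808 * xP^3 * yP^22 * a^5 +
           -2415919104 * xP^3 * yP^24 * b * x₂^4 +
           -301989888 * xP^3 * yP^24 * a * x₂^5 +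
           637534208 * xP^3 * yP^24 * a^2 * x₂^3 +
           17716740096 * xP^3 * yP^24 * a^2 * b +
           -6710886400 * xP^3 * yP^24 * a^3 * x₂ +
           2013265920 * xP^3 * yP^26 * x₂^4 +
           4831838208 * xP^3 * yP^26 * b * x₂ +
           -5905580032 * xP^3 * yP^26 * a * x₂^2 +
           -31004295168 * xP^3 * yP^26 * a^2 +
           -15032385536 * xP^3 * yP^28 * x₂ +
           956301312 * xP^4 * yP^20 * a^6 +
           1509949440 * xP^4 * yP^22 * a * b * x₂^4 +
           -125829120 * xP^4 * yP^22 * a^2 * x₂^5 +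
           503316480 * xP^4 * yP^22 * a^2 * b * x₂^2 +
           -16911433728 * xP^4 * yP^22 * a^3 * b +
           2638217216 * xP^4 * yP^22 * a^4 * x₂ +
           50331648 * xP^4 * yP^24 * x₂^6 +
           11676942336 * xP^4 * yP^24 * b * x₂^3 +
           -1409286144 * xP^4 * yP^24 * a * x₂^4 +
           -20937965568 * xP^4 * yP^24 * a * b * x₂ +
           4680843264 * xP^4 * yP^24 * a^2 * x₂^2 +
           35500589056 * xP^4 * yP^24 * a^3 +
           -2013265920 * xP^4 * yP^26 * x₂^3 +
           -37044092928 * xP^4 * yP^26 * b +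
           38788923392 * xP^4 * yP^26 * a * x₂ +
           44828721152 * xP^4 * yP^28 +
           6794772480 * xP^5 * yP^20 * a^4 * b +
           -452984832 * xP^5 * yP^22 * b * x₂^5 +
           -3019898880 * xP^5 * yP^22 * a * b * x₂^3 +
           629145600 * xP^5 * yP^22 * a^2 * x₂^4 +
           10619977728 * xP^5 * yP^22 * a^2 * b * x₂ +
           -25119686656 * xP^5 * yP^22 * a^4 +
           -150994944 * xP^5 * yP^24 * x₂^5 +
           -10267656192 * xP^5 * yP^24 * b * x₂^2 +
           6643777536 * xP^5 * yP^24 * a * x₂^3 +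
           83751862272 * xP^5 * yP^24 * a * b +
           -38403047424 * xP^5 * yP^24 * a^2 * x₂ +
           -9261023232 * xP^5 * yP^26 * x₂^2 +
           -136767864832 * xP^5 * yP^26 * a +
           7700742144 * xP^6 * yP^20 * a^5 +
           2264924160 * xP^6 * yP^22 * b * x₂^4 +
           -301989888 * xP^6 * yP^22 * a * x₂^5 +
           3019898880 * xP^6 * yP^22 * a * b * x₂^2 +
           -1258291200 * xP^6 * yP^22 * a^2 * x₂^3 +
           -76051120128 * xP^6 * yP^22 * a^2 * b +
           13287555072 * xP^6 * yP^22 * a^3 * x₂ +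
           -603979776 * xP^6 * yP^24 * x₂^4 +
           -24763170816 * xP^6 * yP^24 * b * x₂ +
           2113929216 * xP^6 * yP^24 * a * x₂^2 +
           178207588352 * xP^6 * yP^24 * a^2 +
           49928994816 * xP^6 * yP^26 * x₂ +
           27179089920 * xP^7 * yP^20 * a^3 * b +
           -4529848320 * xP^7 * yP^22 * b * x₂^3 +
           1509949440 * xP^7 * yP^22 * a * x₂^4 +
           20233322496 * xP^7 * yP^22 * a * b * x₂ +
           1258291200 * xP^7 * yP^22 * a^2 * x₂^2 +
           -120191975424 * xP^7 * yP^22 * a^3 +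
           2919235584 * xP^7 * yP^24 * x₂^3 +
           113145544704 * xP^7 * yP^24 * b +
           -75598135296 * xP^7 * yP^24 * a * x₂ +
           -156229435392 * xP^7 * yP^26 +
           33973862400 * xP^8 * yP^20 * a^4 +
           -113246208 * xP^8 * yP^22 * x₂^5 +
           4529848320 * xP^8 * yP^22 * b * x₂^2 +
           -3019898880 * xP^8 * yP^22 * a * x₂^3 +
           -151900913664 * xP^8 * yP^22 * a * b +
           31985762304 * xP^8 * yP^22 * a^2 * x₂ +
           2868903936 * xP^8 * yP^24 * x₂^2 +
           351113576448 * xP^8 * yP^24 * a +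
           61152952320 * xP^9 * yP^20 * a^2 * b +
           566231040 * xP^9 * yP^22 * x₂^4 +
           14042529792 * xP^9 * yP^22 * b * x₂ +
           3019898880 * xP^9 * yP^22 * a * x₂^2 +
           -289331478528 * xP^9 * yP^22 * a^2 +
           -49677336576 * xP^9 * yP^24 * x₂ +
           88332042240 * xP^10 * yP^20 * a^3 +
           -1132462080 * xP^10 * yP^22 * x₂^3 +
           -113699192832 * xP^10 * yP^22 * b +
           36540776448 * xP^10 * yP^22 * a * x₂ +
           229411651584 * xP^10 * yP^24 +
           73383542784 * xP^11 * yP^20 * a * b +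
           1132462080 * xP^11 * yP^22 * x₂^2 +
           -339436634112 * xP^11 * yP^22 * a +
           134536495104 * xP^12 * yP^20 * a^2 +
           15741222912 * xP^12 * yP^22 * x₂ +
           36691771392 * xP^13 * yP^20 * b +
           -150730702848 * xP^13 * yP^22 +
           110075314176 * xP^14 * yP^20 * a +
           36691771392 * xP^16 * yP^20) * h1 +
          (-50331648 * xP * yP^20 * a^8 +
           -805306368 * xP * yP^24 * a^5 +
           -3221225472 * xP * yP^28 * a^2 +
           1811939328 * xP^2 * yP^22 * a^6 +
           19327352832 * xP^2 * yP^26 * a^3 +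
           38654705664 * xP^2 * yP^30 +
           -1207959552 * xP^3 * yP^20 * a^7 +
           -33822867456 * xP^3 * yP^24 * a^4 +
           -135291469824 * xP^3 * yP^28 * a +
           32614907904 * xP^4 * yP^22 * a^5 +
           260919263232 * xP^4 * yP^26 * a^2 +
           -12683575296 * xP^5 * yP^20 * a^6 +
           -333396836352 * xP^5 * yP^24 * a^3 +
           -376883380224 * xP^5 * yP^28 +
           244611809280 * xP^6 * yP^22 * a^4 +
           1043677052928 * xP^6 * yP^26 * a +
           -76101451776 * xP^7 * yP^20 * a^5 +
           -1391569403904 * xP^7 * yP^24 * a^2 +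
           978447237120 * xP^8 * yP^22 * a^3 +
           1304596316160 * xP^8 * yP^26 +
           -285380444160 * xP^9 * yP^20 * a^4 +
           -2674422448128 * xP^9 * yP^24 * a +
           2201506283520 * xP^10 * yP^22 * a^2 +
           -684913065984 * xP^11 * yP^20 * a^3 +
           -1956894474240 * xP^11 * yP^24 +
           2641807540224 * xP^12 * yP^22 * a +
           -1027369598976 * xP^13 * yP^20 * a^2 +
           1320903770112 * xP^14 * yP^22 +
           -880602513408 * xP^15 * yP^20 * a +
           -330225942528 * xP^17 * yP^20) * hEP
      have hM : (2 * yP) ^ 26 * (x₂ - xP) ^ 5 ≠ 0 :=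
        mul_ne_zero (pow_ne_zero _ h2yP) (pow_ne_zero _ hd)
      exact (mul_eq_zero.mp key).resolve_left hM
end

section
/- Let γ₁, γ₂ ∈ k be two distinct roots of x³ + a·x + b, and let P = (x_P, y_P) and Q = (x_Q, y_Q) be affine points of E(k) with 2•P = Q. Then y_P ≠ 0, x_P ≠ γ₁, x_P ≠ γ₂, and the elements ωᵢ := ((3x_P² + a)·(x_Q − γᵢ) + 2y_P·y_Q)/(2y_P·(x_P − γᵢ)) for i = 1, 2 satisfy ωᵢ² = x_Q − γᵢ and x_P·((ω₂ − ω₁)·x_Q + ω₁γ₂ − ω₂γ₁) = y_Q·(γ₂ − γ₁) + γ₁γ₂·(ω₁ − ω₂) − x_Q·(ω₁γ₁ − ω₂γ₂). -/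
open Classical in
theorem stmt_14 {k : Type*} [Field k] (h2 : (2 : k) ≠ 0) (h3 : (3 : k) ≠ 0)
    (a b : k) (hΔ : -16 * (4 * a ^ 3 + 27 * b ^ 2) ≠ 0)
    (γ₁ γ₂ : k) (hγ₁ : γ₁ ^ 3 + a * γ₁ + b = 0) (hγ₂ : γ₂ ^ 3 + a * γ₂ + b = 0)
    (hγ : γ₁ ≠ γ₂)
    (xP yP xQ yQ : k)
    (hP : (shortWCurve a b).Nonsingular xP yP)
    (hQ : (shortWCurve a b).Nonsingular xQ yQ)
    (hPQ : 2 • (WeierstrassCurve.Affine.Point.some xP yP hP)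
        = WeierstrassCurve.Affine.Point.some xQ yQ hQ) :
    yP ≠ 0 ∧ xP ≠ γ₁ ∧ xP ≠ γ₂ ∧
    (let ω₁ : k := ((3 * xP ^ 2 + a) * (xQ - γ₁) + 2 * yP * yQ) / (2 * yP * (xP - γ₁))
     let ω₂ : k := ((3 * xP ^ 2 + a) * (xQ - γ₂) + 2 * yP * yQ) / (2 * yP * (xP - γ₂))
     ω₁ ^ 2 = xQ - γ₁ ∧ ω₂ ^ 2 = xQ - γ₂ ∧
     xP * ((ω₂ - ω₁) * xQ + ω₁ * γ₂ - ω₂ * γ₁) =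
       yQ * (γ₂ - γ₁) + γ₁ * γ₂ * (ω₁ - ω₂) - xQ * (ω₁ * γ₁ - ω₂ * γ₂)) := by
  rw [two_smul] at hPQ
  have hy2 : yP ^ 2 = xP ^ 3 + a * xP + b := by
    have := hP.1
    rw [WeierstrassCurve.Affine.equation_iff] at this
    simp only [shortWCurve] at this
    linear_combination this
  have hyP : yP ≠ 0 := by
    intro h
    have hy : yP = (shortWCurve a b).negY xP yP := by
      simp [WeierstrassCurve.Affine.negY, shortWCurve, h]
    rw [WeierstrassCurve.Affine.Point.add_self_of_Y_eq hy] at hPQ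
    exact (WeierstrassCurve.Affine.Point.some_ne_zero hQ) hPQ.symm
  have hyne : yP ≠ (shortWCurve a b).negY xP yP := by
    simp only [WeierstrassCurve.Affine.negY, shortWCurve]
    intro h
    have h2y : 2 * yP = 0 := by linear_combination h
    rcases mul_eq_zero.mp h2y with h' | h'
    · exact absurd h' h2
    · exact hyP h'
  rw [WeierstrassCurve.Affine.Point.add_self_of_Y_ne hyne] at hPQ
  rw [WeierstrassCurve.Affine.Point.some.injEq] at hPQ
  obtain ⟨hx, hyy⟩ := hPQ
  rw [WeierstrassCurve.Affine.slope_of_Y_ne rfl hyne] at hx hyy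
  simp only [WeierstrassCurve.Affine.addX, WeierstrassCurve.Affine.addY,
    WeierstrassCurve.Affine.negAddY, WeierstrassCurve.Affine.negY, shortWCurve] at hx hyy
  set L : k := (3 * xP ^ 2 + a) / (2 * yP) with hL
  have h2yP : 2 * yP ≠ 0 := mul_ne_zero h2 hyP
  have hLe : L * (2 * yP) = 3 * xP ^ 2 + a := div_mul_cancel₀ _ h2yP
  have e1 : 3 * xP ^ 2 + 2 * 0 * xP + a - 0 * yP = 3 * xP ^ 2 + a := by ring
  have e2 : yP - (-yP - 0 * xP - 0) = 2 * yP := by ring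
  rw [e1, e2, ← hL] at hx hyy
  have hxQ : xQ = L ^ 2 - 2 * xP := by linear_combination -hx
  have hyQ : yQ = L * (xP - xQ) - yP := by rw [hxQ]; linear_combination -hyy
  have hx1 : xP ≠ γ₁ := by
    intro h
    apply hyP
    have : yP ^ 2 = 0 := by rw [hy2, h]; linear_combination hγ₁
    exact pow_eq_zero_iff two_ne_zero |>.mp this
  have hx2 : xP ≠ γ₂ := by
    intro h
    apply hyP
    have : yP ^ 2 = 0 := by rw [hy2, h]; linear_combination hγ₂
    exact pow_eq_zero_iff two_ne_zero |>.mp this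
  have hd1 : xP - γ₁ ≠ 0 := sub_ne_zero.mpr hx1
  have hd2 : xP - γ₂ ≠ 0 := sub_ne_zero.mpr hx2
  refine ⟨hyP, hx1, hx2, ?_, ?_, ?_⟩
  · show (((3 * xP ^ 2 + a) * (xQ - γ₁) + 2 * yP * yQ) / (2 * yP * (xP - γ₁))) ^ 2 = xQ - γ₁
    rw [hyQ, hxQ, ← hLe, div_pow, div_eq_iff (pow_ne_zero 2 (mul_ne_zero h2yP hd1))]
    linear_combination (-(4 * yP ^ 2 * (xP - γ₁))) * hLe + 4 * yP ^ 2 * hy2 + 4 * yP ^ 2 * hγ₁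
  · show (((3 * xP ^ 2 + a) * (xQ - γ₂) + 2 * yP * yQ) / (2 * yP * (xP - γ₂))) ^ 2 = xQ - γ₂
    rw [hyQ, hxQ, ← hLe, div_pow, div_eq_iff (pow_ne_zero 2 (mul_ne_zero h2yP hd2))]
    linear_combination (-(4 * yP ^ 2 * (xP - γ₂))) * hLe + 4 * yP ^ 2 * hy2 + 4 * yP ^ 2 * hγ₂
  · have hw1 : ((3 * xP ^ 2 + a) * (xQ - γ₁) + 2 * yP * yQ) / (2 * yP * (xP - γ₁))
        = L - yP / (xP - γ₁) := by
      rw [hyQ, ← hLe]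
      field_simp
      ring
    have hw2 : ((3 * xP ^ 2 + a) * (xQ - γ₂) + 2 * yP * yQ) / (2 * yP * (xP - γ₂))
        = L - yP / (xP - γ₂) := by
      rw [hyQ, ← hLe]
      field_simp
      ring
    show xP * ((((3 * xP ^ 2 + a) * (xQ - γ₂) + 2 * yP * yQ) / (2 * yP * (xP - γ₂)) -
        ((3 * xP ^ 2 + a) * (xQ - γ₁) + 2 * yP * yQ) / (2 * yP * (xP - γ₁))) * xQ +
        ((3 * xP ^ 2 + a) * (xQ - γ₁) + 2 * yP * yQ) / (2 * yP * (xP - γ₁)) * γ₂ -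
        ((3 * xP ^ 2 + a) * (xQ - γ₂) + 2 * yP * yQ) / (2 * yP * (xP - γ₂)) * γ₁) =
      yQ * (γ₂ - γ₁) + γ₁ * γ₂ *
        (((3 * xP ^ 2 + a) * (xQ - γ₁) + 2 * yP * yQ) / (2 * yP * (xP - γ₁)) -
         ((3 * xP ^ 2 + a) * (xQ - γ₂) + 2 * yP * yQ) / (2 * yP * (xP - γ₂))) -
      xQ * (((3 * xP ^ 2 + a) * (xQ - γ₁) + 2 * yP * yQ) / (2 * yP * (xP - γ₁)) * γ₁ -
            ((3 * xP ^ 2 + a) * (xQ - γ₂) + 2 * yP * yQ) / (2 * yP * (xP - γ₂)) * γ₂)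
    rw [hw1, hw2, hyQ]
    field_simp
    ring
end
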